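/- The boundaries of the good region G are negligible: for every ε ∈ (0, 1/8), lim_{N→∞} N^{1+α} · μ_N(∂^in G) = 0 and lim_{N→∞} N^{1+α} · μ_N(∂^out G) = 0. -/

import Mathlib

open Filter Topology Finset
open scoped Classical

noncomputable section

/-- `a(n)`: `a(0)=1`, `a(n)=n^α` for `n ≥ 1`. -/
def aZR (α : ℝ) (n : ℕ) : ℝ := if n = 0 then 1 else (n : ℝ) ^ α

/-- The set of configurations of `N` particles on `S`. -/
def configs (S : Type*) [Fintype S] (N : ℕ) : Finset (S → ℕ) :=
  (Fintype.piFinset fun _ : S => Finset.range (N + 1)).filter fun η => ∑ x, η x = N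

/-- `π_N = ⌊N^{1/α+1/2}⌋`. -/
def piZR (α : ℝ) (N : ℕ) : ℕ := ⌊(N : ℝ) ^ (1 / α + 1 / 2)⌋₊

/-- The enlarged valley `D^x = {η : η_x ≥ N(1-2ε)}`. -/
def Dwell (S : Type*) [Fintype S] (ε : ℝ) (N : ℕ) (x : S) : Finset (S → ℕ) :=
  (configs S N).filter fun η => (N : ℝ) * (1 - 2 * ε) ≤ (η x : ℝ)

/-- The tube `T^{x,y} = {η : η_x + η_y ≥ N - π_N}`. -/
def Ttube (S : Type*) [Fintype S] (α : ℝ) (N : ℕ) (x y : S) : Finset (S → ℕ) :=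
  (configs S N).filter fun η => N ≤ η x + η y + piZR α N

/-- The saddle tube `J^{x,y} = T^{x,y} ∖ (D^x ∪ D^y)`. -/
def Jtube (S : Type*) [Fintype S] (α ε : ℝ) (N : ℕ) (x y : S) : Finset (S → ℕ) :=
  Ttube S α N x y \ (Dwell S ε N x ∪ Dwell S ε N y)

/-- The good region `G`. -/
def Gset (S : Type*) [Fintype S] (α ε : ℝ) (Sstar : Finset S) (N : ℕ) :
    Finset (S → ℕ) :=
  Sstar.biUnion (fun x => Dwell S ε N x) ∪
    Sstar.biUnion (fun x => (Sstar.erase x).biUnion fun y => Jtube S α ε N x y)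

/-- Inner boundary of the saddle tube. -/
def bdInJ (S : Type*) [Fintype S] (α ε : ℝ) (N : ℕ) (x y : S) : Finset (S → ℕ) :=
  (Jtube S α ε N x y).filter fun η => η x + η y + piZR α N = N

/-- Outer boundary of the saddle tube. -/
def bdOutJ (S : Type*) [Fintype S] (α ε : ℝ) (Sstar : Finset S) (N : ℕ) (x y : S) :
    Finset (S → ℕ) :=
  ((configs S N) \ Gset S α ε Sstar N).filter fun η => η x + η y + piZR α N + 1 = N

/-- Inner boundary of the enlarged valley. -/
def bdInD (S : Type*) [Fintype S] (α ε : ℝ) (Sstar : Finset S) (N : ℕ) (x : S) :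
    Finset (S → ℕ) :=
  ((Dwell S ε N x).filter fun η => η x = ⌈(N : ℝ) * (1 - 2 * ε)⌉₊) \
    (Sstar.erase x).biUnion (fun y => Ttube S α N x y)

/-- Outer boundary of the enlarged valley. -/
def bdOutD (S : Type*) [Fintype S] (α ε : ℝ) (Sstar : Finset S) (N : ℕ) (x : S) :
    Finset (S → ℕ) :=
  (((configs S N) \ Gset S α ε Sstar N).filter
      fun η => η x + 1 = ⌈(N : ℝ) * (1 - 2 * ε)⌉₊) \
    (Sstar.erase x).biUnion (fun y => Ttube S α N x y)

/-- Inner boundary of `G`. -/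
def bdInG (S : Type*) [Fintype S] (α ε : ℝ) (Sstar : Finset S) (N : ℕ) :
    Finset (S → ℕ) :=
  Sstar.biUnion (fun x => bdInD S α ε Sstar N x) ∪
    Sstar.biUnion (fun x => (Sstar.erase x).biUnion fun y => bdInJ S α ε N x y)

/-- Outer boundary of `G`. -/
def bdOutG (S : Type*) [Fintype S] (α ε : ℝ) (Sstar : Finset S) (N : ℕ) :
    Finset (S → ℕ) :=
  Sstar.biUnion (fun x => bdOutD S α ε Sstar N x) ∪
    Sstar.biUnion (fun x => (Sstar.erase x).biUnion fun y => bdOutJ S α ε Sstar N x y)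

end


section zrpAux
variable {α : ℝ}

variable {α : ℝ}

lemma bern_step (hα : 2 ≤ α) {x : ℝ} (hx : 1 ≤ x) :
    (x+1) ^ (-α) ≤ (α-1)⁻¹ * (x ^ (1-α) - (x+1) ^ (1-α)) := by
  have hx0 : (0:ℝ) < x := by linarith
  have hx1 : (0:ℝ) < x + 1 := by linarith
  have h1x : (0:ℝ) < 1/x := by positivity
  have hb : 1 + (α-1) * (1/x) ≤ (1 + 1/x) ^ (α-1) :=
    one_add_mul_self_le_rpow_one_add (by linarith) (by linarith)
  have h1 : (1 + 1/x) ^ (α-1) = (x+1) ^ (α-1) / x ^ (α-1) := by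
    have hx' : 1 + 1/x = (x+1)/x := by field_simp
    rw [hx', Real.div_rpow (by linarith) hx0.le]
  have h2 : (x+1) ^ (1-α) * ((x+1) ^ (α-1) / x ^ (α-1)) = x ^ (1-α) := by
    rw [mul_div_assoc', ← Real.rpow_add hx1]
    have he : (1 - α) + (α - 1) = 0 := by ring
    rw [he, Real.rpow_zero, one_div, ← Real.rpow_neg hx0.le]
    congr 1; ring
  have h3 : (x+1) ^ (1-α) * (1 + (α-1) * (1/x)) ≤ x ^ (1-α) := by
    rw [h1] at hb
    calc (x+1) ^ (1-α) * (1 + (α-1) * (1/x))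
        ≤ (x+1) ^ (1-α) * ((x+1) ^ (α-1) / x ^ (α-1)) :=
          mul_le_mul_of_nonneg_left hb (Real.rpow_nonneg hx1.le _)
      _ = x ^ (1-α) := h2
  have h4 : (α-1) * (x+1) ^ (-α) ≤ (x+1) ^ (1-α) * ((α-1) * (1/x)) := by
    have e1 : (x+1) ^ (1-α) = (x+1) ^ (-α) * (x+1) := by
      rw [← Real.rpow_add_one (by linarith) (-α)]; congr 1; ring
    rw [e1]
    have hge : (1:ℝ) ≤ (x+1) * (1/x) := by
      rw [← div_eq_mul_one_div, le_div_iff₀ hx0]; linarith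
    have h5 : (x+1) ^ (-α) * 1 ≤ (x+1) ^ (-α) * ((x+1) * (1/x)) :=
      mul_le_mul_of_nonneg_left hge (Real.rpow_nonneg hx1.le _)
    have hα1 : (0:ℝ) ≤ α - 1 := by linarith
    calc (α-1) * (x+1) ^ (-α) = ((x+1) ^ (-α) * 1) * (α - 1) := by ring
      _ ≤ ((x+1) ^ (-α) * ((x+1) * (1/x))) * (α-1) := by
          exact mul_le_mul_of_nonneg_right h5 hα1
      _ = (x+1) ^ (-α) * (x+1) * ((α-1) * (1/x)) := by ring
  have hkey : (α-1) * (x+1) ^ (-α) ≤ x ^ (1-α) - (x+1) ^ (1-α) := by nlinarith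
  have hαpos : (0:ℝ) < α - 1 := by linarith
  rw [inv_mul_eq_div, le_div_iff₀ hαpos, mul_comm]
  exact hkey

lemma tail_sum_nat (hα : 2 ≤ α) {m : ℕ} (hm : 1 ≤ m) (N : ℕ) :
    ∑ n ∈ range (N+1), (if m ≤ n then ((n:ℝ)) ^ (-α) else 0)
      ≤ (m:ℝ) ^ (-α) + (α-1)⁻¹ * ((m:ℝ) ^ (1-α) - ((max m N : ℕ):ℝ) ^ (1-α)) := by
  induction N with
  | zero =>
    rw [show (0:ℕ)+1 = 1 from rfl, range_one, sum_singleton]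
    rw [if_neg (by omega)]
    have : max m 0 = m := by omega
    rw [this]
    simp only [sub_self, mul_zero, add_zero]
    positivity
  | succ N ih =>
    rw [sum_range_succ]
    rcases lt_trichotomy (N+1) m with h | h | h
    · rw [if_neg (by omega)]
      have : max m (N+1) = max m N := by omega
      rw [this, add_zero]; exact ih
    · have hz : (∑ n ∈ range (N+1), if m ≤ n then ((n:ℝ)) ^ (-α) else 0) = 0 := by
        apply sum_eq_zero; intro n hn
        rw [if_neg]
        have := mem_range.mp hn; omega
      rw [if_pos (by omega), hz, zero_add]
      subst h
      simp only [max_self, sub_self, mul_zero, add_zero]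
      exact le_refl _

    · rw [if_pos (by omega)]
      have h1 : max m N = N := by omega
      have h2 : max m (N+1) = N+1 := by omega
      rw [h1] at ih; rw [h2]
      have hN1 : (1:ℝ) ≤ (N:ℝ) := by
        have : 1 ≤ N := by omega
        exact_mod_cast this
      have hb := bern_step hα hN1
      have hcast : ((N:ℝ)+1) = ((N+1:ℕ):ℝ) := by push_cast; ring
      rw [hcast] at hb
      linarith

lemma tail_sum_real (hα : 2 ≤ α) {M : ℝ} (hM : 1 ≤ M) (N : ℕ) :
    ∑ n ∈ range (N+1), (if M ≤ (n:ℝ) then ((n:ℝ)) ^ (-α) else 0)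
      ≤ 2 * M ^ (1-α) := by
  have hM0 : (0:ℝ) < M := by linarith
  set m := ⌈M⌉₊ with hm
  have hm1 : 1 ≤ m := Nat.one_le_ceil_iff.mpr (by linarith)
  have hMm : M ≤ (m:ℝ) := Nat.le_ceil M
  have step1 : ∑ n ∈ range (N+1), (if M ≤ (n:ℝ) then ((n:ℝ)) ^ (-α) else 0)
      ≤ ∑ n ∈ range (N+1), (if m ≤ n then ((n:ℝ)) ^ (-α) else 0) := by
    apply sum_le_sum
    intro n _
    by_cases h : M ≤ (n:ℝ)
    · rw [if_pos h, if_pos (by exact_mod_cast Nat.ceil_le.mpr h)]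
    · rw [if_neg h]
      by_cases h2 : m ≤ n
      · rw [if_pos h2]; positivity
      · rw [if_neg h2]
  have step2 := tail_sum_nat hα hm1 N
  have hmpos : (0:ℝ) < (m:ℝ) := by exact_mod_cast hm1
  have h1m : (1:ℝ) ≤ (m:ℝ) := by exact_mod_cast hm1
  have e1 : (m:ℝ) ^ (-α) ≤ (m:ℝ) ^ (1-α) :=
    Real.rpow_le_rpow_of_exponent_le h1m (by linarith)
  have e2 : (α-1)⁻¹ * ((m:ℝ) ^ (1-α) - ((max m N : ℕ):ℝ) ^ (1-α))
      ≤ (m:ℝ) ^ (1-α) := by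
    have hmax : (0:ℝ) ≤ ((max m N : ℕ):ℝ) ^ (1-α) := Real.rpow_nonneg (by positivity) _
    have hinv : (α-1)⁻¹ ≤ 1 := by
      rw [inv_le_one_iff₀]; right; linarith
    have hinv0 : (0:ℝ) ≤ (α-1)⁻¹ := by
      apply inv_nonneg.mpr; linarith
    have hp : (0:ℝ) ≤ (m:ℝ) ^ (1-α) := Real.rpow_nonneg hmpos.le _
    calc (α-1)⁻¹ * ((m:ℝ) ^ (1-α) - ((max m N : ℕ):ℝ) ^ (1-α))
        ≤ (α-1)⁻¹ * (m:ℝ) ^ (1-α) := by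
          apply mul_le_mul_of_nonneg_left _ hinv0; linarith
      _ ≤ 1 * (m:ℝ) ^ (1-α) := mul_le_mul_of_nonneg_right hinv hp
      _ = (m:ℝ) ^ (1-α) := one_mul _
  have e3 : (m:ℝ) ^ (1-α) ≤ M ^ (1-α) :=
    Real.rpow_le_rpow_of_nonpos hM0 hMm (by linarith)
  linarith

lemma sum_le_three (hα : 2 ≤ α) (N : ℕ) (f : ℕ → ℝ) (hf0 : f 0 ≤ 1)
    (hfnn : ∀ n, 0 ≤ f n) (hf : ∀ n, 1 ≤ n → f n ≤ ((n:ℝ)) ^ (-α)) :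
    ∑ n ∈ range (N+1), f n ≤ 3 := by
  have hpt : ∀ n ∈ range (N+1),
      f n ≤ (if n = 0 then (1:ℝ) else 0) + (if (1:ℝ) ≤ (n:ℝ) then ((n:ℝ)) ^ (-α) else 0) := by
    intro n _
    rcases Nat.eq_zero_or_pos n with h | h
    · subst h
      rw [if_pos rfl, if_neg (by norm_num)]
      linarith
    · rw [if_neg (by omega), if_pos (by exact_mod_cast h)]
      simpa using hf n h
  calc ∑ n ∈ range (N+1), f n
      ≤ ∑ n ∈ range (N+1), ((if n = 0 then (1:ℝ) else 0)
          + (if (1:ℝ) ≤ (n:ℝ) then ((n:ℝ)) ^ (-α) else 0)) := sum_le_sum hpt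
    _ = (∑ n ∈ range (N+1), (if n = 0 then (1:ℝ) else 0))
          + ∑ n ∈ range (N+1), (if (1:ℝ) ≤ (n:ℝ) then ((n:ℝ)) ^ (-α) else 0) := sum_add_distrib
    _ ≤ 1 + 2 * (1:ℝ) ^ (1-α) := by
        have h1 : (∑ n ∈ range (N+1), (if n = 0 then (1:ℝ) else 0)) = 1 := by
          rw [Finset.sum_ite_eq' (range (N+1)) 0 (fun _ => (1:ℝ))]
          rw [if_pos (mem_range.mpr (by omega))]
        rw [h1]
        have := tail_sum_real hα (le_refl (1:ℝ)) N
        linarith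
    _ = 3 := by rw [Real.one_rpow]; norm_num


end zrpAux

noncomputable def FF {S : Type*} (α : ℝ) (mstar : S → ℝ) (z : S) (n : ℕ) : ℝ :=
  mstar z ^ n / aZR α n

section basics2
variable {S : Type*} [Fintype S] {α : ℝ} {mstar : S → ℝ}

variable {S : Type*} [Fintype S] {α : ℝ} {mstar : S → ℝ}

lemma aZR_pos' (α : ℝ) (n : ℕ) : 0 < aZR α n := by
  unfold aZR
  split
  · norm_num
  · exact Real.rpow_pos_of_pos (by positivity) _

lemma one_le_aZR' (hα : 0 ≤ α) (n : ℕ) : 1 ≤ aZR α n := by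
  unfold aZR
  split
  · exact le_refl 1
  · rename_i h
    calc (1:ℝ) = 1 ^ α := (Real.one_rpow α).symm
      _ ≤ (n:ℝ) ^ α := by
          apply Real.rpow_le_rpow (by norm_num) _ hα
          exact_mod_cast Nat.one_le_iff_ne_zero.mpr h

lemma FF_pos (hms0 : ∀ z, 0 < mstar z) (z : S) (n : ℕ) : 0 < FF α mstar z n := by
  unfold FF
  exact div_pos (pow_pos (hms0 z) n) (aZR_pos' α n)

lemma FF_le_one (hα : 0 ≤ α) (hms0 : ∀ z, 0 < mstar z) (hms1 : ∀ z, mstar z ≤ 1)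
    (z : S) (n : ℕ) : FF α mstar z n ≤ 1 := by
  unfold FF
  rw [div_le_one (aZR_pos' α n)]
  calc mstar z ^ n ≤ 1 ^ n := pow_le_pow_left₀ (hms0 z).le (hms1 z) n
    _ = 1 := one_pow n
    _ ≤ _ := one_le_aZR' hα n

lemma FF_le_rpow (hα : 0 ≤ α) (hms0 : ∀ z, 0 < mstar z) (hms1 : ∀ z, mstar z ≤ 1)
    (z : S) {n : ℕ} (hn : 1 ≤ n) : FF α mstar z n ≤ ((n:ℝ)) ^ (-α) := by
  unfold FF aZR
  rw [if_neg (by omega)]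
  have hn0 : (0:ℝ) < (n:ℝ) := by exact_mod_cast hn
  rw [Real.rpow_neg hn0.le, div_le_iff₀ (Real.rpow_pos_of_pos hn0 α),
    inv_mul_cancel₀ (ne_of_gt (Real.rpow_pos_of_pos hn0 α))]
  calc mstar z ^ n ≤ 1 ^ n := pow_le_pow_left₀ (hms0 z).le (hms1 z) n
    _ = 1 := one_pow n

lemma FF_le_pow (hα : 0 ≤ α) (hms0 : ∀ z, 0 < mstar z) (z : S) (n : ℕ) :
    FF α mstar z n ≤ mstar z ^ n := by
  unfold FF
  exact div_le_self (pow_pos (hms0 z) n).le (one_le_aZR' hα n)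

lemma FF_le_const (hα : 0 ≤ α) (hms0 : ∀ z, 0 < mstar z) (hms1 : ∀ z, mstar z ≤ 1)
    (z : S) {n : ℕ} {M : ℝ} (hM : 0 < M) (hn : M ≤ (n:ℝ)) (h1 : 1 ≤ M) :
    FF α mstar z n ≤ M ^ (-α) := by
  have hn1 : 1 ≤ n := by exact_mod_cast (le_trans h1 hn : (1:ℝ) ≤ (n:ℝ))
  calc FF α mstar z n ≤ ((n:ℝ)) ^ (-α) := FF_le_rpow hα hms0 hms1 z hn1
    _ ≤ M ^ (-α) := Real.rpow_le_rpow_of_nonpos hM hn (by linarith)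

lemma sum_FF_le_three (hα : 2 ≤ α) (hms0 : ∀ z, 0 < mstar z) (hms1 : ∀ z, mstar z ≤ 1)
    (z : S) (N : ℕ) : ∑ n ∈ range (N+1), FF α mstar z n ≤ 3 := by
  refine sum_le_three hα N _ ?_ (fun n => (FF_pos hms0 z n).le)
    (fun n hn => FF_le_rpow (by linarith) hms0 hms1 z hn)
  unfold FF aZR
  norm_num

lemma sum_union_le_real {β : Type*} [DecidableEq β] (s t : Finset β) (f : β → ℝ)
    (hf : ∀ b, 0 ≤ f b) : ∑ b ∈ s ∪ t, f b ≤ ∑ b ∈ s, f b + ∑ b ∈ t, f b := by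
  rw [← Finset.union_sdiff_self_eq_union, Finset.sum_union sdiff_disjoint.symm]
  have h := sum_le_sum_of_subset_of_nonneg (sdiff_subset : t \ s ⊆ t) (fun b _ _ => hf b)
  linarith

lemma sum_biUnion_le_real {β ι : Type*} [DecidableEq β] (W : Finset ι) (A : ι → Finset β)
    (f : β → ℝ) (hf : ∀ b, 0 ≤ f b) :
    ∑ b ∈ W.biUnion A, f b ≤ ∑ w ∈ W, ∑ b ∈ A w, f b := by
  classical
  induction W using Finset.induction with
  | empty => simp
  | @insert a W' h ih =>
    rw [Finset.biUnion_insert, Finset.sum_insert h]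
    calc ∑ b ∈ A a ∪ W'.biUnion A, f b ≤ ∑ b ∈ A a, f b + ∑ b ∈ W'.biUnion A, f b :=
          sum_union_le_real _ _ f hf
      _ ≤ _ := by gcongr

lemma prod_ite_le {S : Type*} [Fintype S] (T : Finset S) (x : S) (hx : x ∈ T) (t : ℝ)
    (ht : 0 ≤ t) : ∏ z ∈ T, (if z = x then t else (3:ℝ)) ≤ t * 3 ^ (Fintype.card S) := by
  rw [← Finset.mul_prod_erase T _ hx, if_pos rfl]
  apply mul_le_mul_of_nonneg_left _ ht
  calc ∏ z ∈ T.erase x, (if z = x then t else (3:ℝ))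
      = ∏ z ∈ T.erase x, (3:ℝ) := by
        apply prod_congr rfl
        intro z hz
        rw [if_neg (ne_of_mem_erase hz)]
    _ = 3 ^ (T.erase x).card := prod_const 3
    _ ≤ 3 ^ (Fintype.card S) := by
        apply pow_le_pow_right₀ (by norm_num)
        exact le_trans (card_le_card (subset_univ _)) (le_of_eq (card_univ))

lemma prod_const_le {S : Type*} [Fintype S] (T : Finset S) :
    ∏ _z ∈ T, (3:ℝ) ≤ 3 ^ (Fintype.card S) := by
  rw [prod_const]
  apply pow_le_pow_right₀ (by norm_num)
  exact le_trans (card_le_card (subset_univ _)) (le_of_eq (card_univ))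


end basics2


lemma master_proj {S : Type*} [Fintype S] (N : ℕ) (u v : S) (huv : u ≠ v)
    (P : Finset (S → ℕ)) (hPN : ∀ η ∈ P, ∀ z, η z ≤ N)
    (hinj : ∀ η₁ ∈ P, ∀ η₂ ∈ P,
      (fun z : S => if z = u ∨ z = v then 0 else η₁ z)
        = (fun z : S => if z = u ∨ z = v then 0 else η₂ z) → η₁ = η₂)
    (g : S → ℕ → ℝ) (hg : ∀ z n, 0 ≤ g z n) :
    ∑ η ∈ P, ∏ z ∈ (univ.erase u).erase v, g z (η z)
      ≤ ∏ z ∈ (univ.erase u).erase v, ∑ n ∈ range (N+1), g z n := by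
  classical
  set T : Finset S := (univ.erase u).erase v with hT
  have hmemT : ∀ z, z ∈ T ↔ (z ≠ v ∧ z ≠ u) := by
    intro z
    simp [hT, mem_erase]
  set proj : (S → ℕ) → (S → ℕ) := fun η => fun z => if z = u ∨ z = v then 0 else η z
    with hproj
  set t : S → Finset ℕ := fun z => if z = u ∨ z = v then {0} else range (N+1) with ht
  set gh : S → ℕ → ℝ := fun z n => if z = u ∨ z = v then 1 else g z n with hgh
  have step1 : ∑ η ∈ P, ∏ z ∈ T, g z (η z)
      = ∑ ξ ∈ P.image proj, ∏ z ∈ T, g z (ξ z) := by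
    rw [Finset.sum_image (fun x hx y hy h => hinj x hx y hy h)]
    apply sum_congr rfl
    intro η _
    apply prod_congr rfl
    intro z hz
    have h := (hmemT z).mp hz
    simp only [hproj]
    rw [if_neg (by tauto)]
  have himg : P.image proj ⊆ Fintype.piFinset t := by
    intro ξ hξ
    obtain ⟨η, hη, rfl⟩ := Finset.mem_image.mp hξ
    rw [Fintype.mem_piFinset]
    intro z
    simp only [hproj, ht]
    by_cases h : z = u ∨ z = v
    · rw [if_pos h, if_pos h]; exact mem_singleton_self 0
    · rw [if_neg h, if_neg h]
      exact mem_range.mpr (Nat.lt_succ_of_le (hPN η hη z))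
  have step2 : ∑ ξ ∈ P.image proj, ∏ z ∈ T, g z (ξ z)
      ≤ ∑ ξ ∈ Fintype.piFinset t, ∏ z ∈ T, g z (ξ z) := by
    apply sum_le_sum_of_subset_of_nonneg himg
    intro ξ _ _
    exact prod_nonneg (fun z _ => hg z (ξ z))
  have step3 : ∀ ξ : S → ℕ, ∏ z ∈ T, g z (ξ z) = ∏ z, gh z (ξ z) := by
    intro ξ
    have e : ∏ z ∈ T, g z (ξ z) = ∏ z ∈ T, gh z (ξ z) := by
      apply prod_congr rfl
      intro z hz
      have h := (hmemT z).mp hz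
      simp only [hgh]
      rw [if_neg (by tauto)]
    rw [e]
    apply Finset.prod_subset (subset_univ T)
    intro z _ hz
    have h2 : z = v ∨ z = u := by
      by_contra h
      push_neg at h
      exact hz ((hmemT z).mpr ⟨h.1, h.2⟩)
    simp only [hgh]
    rw [if_pos (by tauto)]
  have step4 : ∑ ξ ∈ Fintype.piFinset t, ∏ z, gh z (ξ z)
      = ∏ z, ∑ n ∈ t z, gh z n := (Finset.prod_univ_sum t gh).symm
  have step5 : ∏ z, ∑ n ∈ t z, gh z n = ∏ z ∈ T, ∑ n ∈ range (N+1), g z n := by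
    symm
    have e : ∏ z ∈ T, ∑ n ∈ range (N+1), g z n = ∏ z ∈ T, ∑ n ∈ t z, gh z n := by
      apply prod_congr rfl
      intro z hz
      have h := (hmemT z).mp hz
      simp only [ht, hgh]
      rw [if_neg (by tauto)]
      apply sum_congr rfl
      intro n _
      rw [if_neg (by tauto)]
    rw [e]
    apply Finset.prod_subset (subset_univ T)
    intro z _ hz
    have hz' : z = u ∨ z = v := by
      by_contra h
      push_neg at h
      exact hz ((hmemT z).mpr ⟨h.2, h.1⟩)
    simp only [ht, hgh]
    rw [if_pos hz', sum_singleton, if_pos hz']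
  calc ∑ η ∈ P, ∏ z ∈ T, g z (η z)
      = ∑ ξ ∈ P.image proj, ∏ z ∈ T, g z (ξ z) := step1
    _ ≤ ∑ ξ ∈ Fintype.piFinset t, ∏ z ∈ T, g z (ξ z) := step2
    _ = ∑ ξ ∈ Fintype.piFinset t, ∏ z, gh z (ξ z) := by
        apply sum_congr rfl; intro ξ _; exact step3 ξ
    _ = ∏ z, ∑ n ∈ t z, gh z n := step4
    _ = ∏ z ∈ T, ∑ n ∈ range (N+1), g z n := step5

lemma mem_configs_iff {S : Type*} [Fintype S] {N : ℕ} {η : S → ℕ} :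
    η ∈ configs S N ↔ (∀ z, η z ≤ N) ∧ ∑ z, η z = N := by
  unfold configs
  rw [mem_filter, Fintype.mem_piFinset]
  constructor
  · rintro ⟨h1, h2⟩
    exact ⟨fun z => Nat.lt_succ_iff.mp (mem_range.mp (h1 z)), h2⟩
  · rintro ⟨h1, h2⟩
    exact ⟨fun z => mem_range.mpr (Nat.lt_succ_of_le (h1 z)), h2⟩

lemma Jpiece {S : Type*} [Fintype S] {α ε : ℝ} (hα : 2 < α) (hε : 0 < ε)
    {mstar : S → ℝ} (hms0 : ∀ z, 0 < mstar z) (hms1 : ∀ z, mstar z ≤ 1)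
    (N c : ℕ) (hc : c ≤ 1) (x y : S) (hxy : x ≠ y)
    (P : Finset (S → ℕ)) (hPc : P ⊆ configs S N)
    (hsum : ∀ η ∈ P, η x + η y + piZR α N + c = N)
    (hnx : ∀ η ∈ P, ((η x : ℝ)) < N * (1-2*ε))
    (hny : ∀ η ∈ P, ((η y : ℝ)) < N * (1-2*ε))
    (hπs : Fintype.card S ≤ piZR α N)
    (hπε : ((piZR α N : ℝ)) + 1 ≤ ε * N) :
    ∑ η ∈ P, ∏ z, FF α mstar z (η z)
      ≤ (Fintype.card S : ℝ) * ((ε*N) ^ (-α) * (((piZR α N : ℝ)/(Fintype.card S : ℝ)) ^ (-α)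
          * (2 * (ε*N) ^ (1-α) * 3 ^ (Fintype.card S)))) := by
  classical
  have hα0 : (0:ℝ) ≤ α := by linarith
  set s := Fintype.card S with hsdef
  set π := piZR α N with hπdef
  have hs1 : 1 ≤ s := @Fintype.card_pos S _ ⟨x⟩
  have hs0 : (0:ℝ) < (s:ℝ) := by exact_mod_cast hs1
  have hπ1 : 1 ≤ π := le_trans hs1 hπs
  have hπ0 : (0:ℝ) ≤ (π:ℝ) := by positivity
  have hεN1 : (1:ℝ) ≤ ε*N := by linarith
  have hεN0 : (0:ℝ) < ε*N := by linarith
  have hπs' : (1:ℝ) ≤ (π:ℝ)/(s:ℝ) := by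
    rw [le_div_iff₀ hs0, one_mul]
    exact_mod_cast hπs
  have hπsdiv0 : (0:ℝ) < (π:ℝ)/(s:ℝ) := by linarith
  set R : Finset S := (univ.erase x).erase y with hRdef
  have hmemR : ∀ z, z ∈ R ↔ (z ≠ y ∧ z ≠ x) := by
    intro z; simp [hRdef, mem_erase]
  have hconf : ∀ η ∈ P, (∀ z, η z ≤ N) ∧ ∑ z, η z = N :=
    fun η hη => mem_configs_iff.mp (hPc hη)
  have hRsum : ∀ η ∈ P, ∑ z ∈ R, η z = π + c := by
    intro η hη
    have h1 : η x + ∑ z ∈ univ.erase x, η z = ∑ z, η z :=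
      Finset.add_sum_erase univ η (mem_univ x)
    have h2 : η y + ∑ z ∈ R, η z = ∑ z ∈ univ.erase x, η z := by
      rw [hRdef]
      exact Finset.add_sum_erase _ η (mem_erase.mpr ⟨hxy.symm, mem_univ y⟩)
    have h3 := (hconf η hη).2
    have h4 := hsum η hη
    omega
  set A : S → Finset (S → ℕ) := fun w => P.filter (fun η' => π + c ≤ R.card * η' w)
    with hAdef
  have hcov : ∀ η ∈ P, ∃ w ∈ R, η ∈ A w := by
    intro η hη
    have hR : R.Nonempty := by
      rcases Finset.eq_empty_or_nonempty R with h | h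
      · exfalso
        have := hRsum η hη
        rw [h, sum_empty] at this
        omega
      · exact h
    have hsum1 : ∑ w ∈ R, (π + c) ≤ ∑ w ∈ R, R.card * η w := by
      rw [sum_const, ← Finset.mul_sum, hRsum η hη, smul_eq_mul]
    obtain ⟨w, hw, hle⟩ := Finset.exists_le_of_sum_le hR hsum1
    exact ⟨w, hw, mem_filter.mpr ⟨hη, hle⟩⟩
  have hFnn : ∀ η : S → ℕ, 0 ≤ ∏ z, FF α mstar z (η z) :=
    fun η => prod_nonneg (fun z _ => (FF_pos hms0 z (η z)).le)
  have hsplit : ∑ η ∈ P, ∏ z, FF α mstar z (η z)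
      ≤ ∑ w ∈ R, ∑ η ∈ A w, ∏ z, FF α mstar z (η z) := by
    calc ∑ η ∈ P, ∏ z, FF α mstar z (η z)
        ≤ ∑ η ∈ R.biUnion A, ∏ z, FF α mstar z (η z) := by
          apply sum_le_sum_of_subset_of_nonneg
          · intro η hη; exact mem_biUnion.mpr (hcov η hη)
          · intro η _ _; exact hFnn η
      _ ≤ _ := sum_biUnion_le_real R A _ hFnn
  have hwbound : ∀ w ∈ R, ∑ η ∈ A w, ∏ z, FF α mstar z (η z)
      ≤ (ε*N) ^ (-α) * (((π:ℝ)/(s:ℝ)) ^ (-α) * (2 * (ε*N) ^ (1-α) * 3 ^ s)) := by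
    intro w hw
    have hwy : w ≠ y := ((hmemR w).mp hw).1
    have hwx : w ≠ x := ((hmemR w).mp hw).2
    set T : Finset S := (univ.erase y).erase w with hTdef
    have hxT : x ∈ T := by
      rw [hTdef, mem_erase, mem_erase]
      exact ⟨Ne.symm hwx, hxy, mem_univ x⟩
    set g : S → ℕ → ℝ := fun z n =>
      if z = x then (if ε*N ≤ (n:ℝ) then ((n:ℝ)) ^ (-α) else 0) else FF α mstar z n
      with hgdef
    have hgnn : ∀ z n, 0 ≤ g z n := by
      intro z n
      rw [hgdef]
      dsimp only
      split
      · split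
        · positivity
        · exact le_refl 0
      · exact (FF_pos hms0 z n).le
    -- coordinate facts
    have hcoord : ∀ η ∈ A w, ε*N ≤ (η x:ℝ) ∧ ε*N ≤ (η y:ℝ) ∧ (π:ℝ)/(s:ℝ) ≤ (η w:ℝ) := by
      intro η hηA
      have hηP : η ∈ P := (mem_filter.mp hηA).1
      have hflt : π + c ≤ R.card * η w := (mem_filter.mp hηA).2
      have h4 := hsum η hηP
      have hcast : ((η x:ℝ)) + (η y:ℝ) + (π:ℝ) + (c:ℝ) = (N:ℝ) := by
        exact_mod_cast congrArg (Nat.cast : ℕ → ℝ) h4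
      have hc' : (c:ℝ) ≤ 1 := by exact_mod_cast hc
      have hx' := hnx η hηP
      have hy' := hny η hηP
      refine ⟨by nlinarith, by nlinarith, ?_⟩
      have hRs : R.card ≤ s := by
        rw [hsdef, ← card_univ]
        exact card_le_card (subset_univ R)
      have : (π:ℝ) ≤ (s:ℝ) * (η w:ℝ) := by
        have h5 : π + c ≤ s * η w :=
          le_trans hflt (Nat.mul_le_mul_right _ hRs)
        have : (π:ℝ) + (c:ℝ) ≤ (s:ℝ) * (η w:ℝ) := by exact_mod_cast h5
        have hc0 : (0:ℝ) ≤ (c:ℝ) := by positivity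
        linarith
      rw [div_le_iff₀ hs0]
      linarith [this]
    -- pointwise bound
    have hpt : ∀ η ∈ A w, ∏ z, FF α mstar z (η z)
        ≤ (ε*N) ^ (-α) * (((π:ℝ)/(s:ℝ)) ^ (-α) * ∏ z ∈ T, g z (η z)) := by
      intro η hηA
      obtain ⟨hcx, hcy, hcw⟩ := hcoord η hηA
      have e1 : ∏ z, FF α mstar z (η z)
          = FF α mstar y (η y) * (FF α mstar w (η w)
            * ∏ z ∈ T, FF α mstar z (η z)) := by
        rw [hTdef, ← Finset.mul_prod_erase univ (fun z => FF α mstar z (η z)) (mem_univ y),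
          ← Finset.mul_prod_erase (univ.erase y) _ (mem_erase.mpr ⟨hwy, mem_univ w⟩)]
      have t1 : FF α mstar y (η y) ≤ (ε*N) ^ (-α) :=
        FF_le_const hα0 hms0 hms1 y hεN0 hcy hεN1
      have t2 : FF α mstar w (η w) ≤ ((π:ℝ)/(s:ℝ)) ^ (-α) :=
        FF_le_const hα0 hms0 hms1 w hπsdiv0 hcw hπs'
      have t3 : ∏ z ∈ T, FF α mstar z (η z) ≤ ∏ z ∈ T, g z (η z) := by
        apply Finset.prod_le_prod (fun z _ => (FF_pos hms0 z (η z)).le)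
        intro z _
        by_cases hzx : z = x
        · subst hzx
          have hη1 : 1 ≤ η z := by
            have : (1:ℝ) ≤ (η z:ℝ) := le_trans hεN1 hcx
            exact_mod_cast this
          simp only [hgdef, if_pos rfl]
          rw [if_pos hcx]
          exact FF_le_rpow hα0 hms0 hms1 z hη1
        · simp only [hgdef]
          rw [if_neg hzx]
      have hFFnn : (0:ℝ) ≤ ∏ z ∈ T, FF α mstar z (η z) :=
        prod_nonneg (fun z _ => (FF_pos hms0 z (η z)).le)
      rw [e1]
      apply mul_le_mul t1 _ _ (by positivity)
      · apply mul_le_mul t2 t3 hFFnn (by positivity)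
      · exact mul_nonneg (FF_pos (α := α) hms0 w (η w)).le hFFnn
    -- injectivity
    have hinj : ∀ η₁ ∈ A w, ∀ η₂ ∈ A w,
        (fun z : S => if z = y ∨ z = w then 0 else η₁ z)
          = (fun z : S => if z = y ∨ z = w then 0 else η₂ z) → η₁ = η₂ := by
      intro η₁ h₁ η₂ h₂ hproj
      have hmem₁ : η₁ ∈ P := (mem_filter.mp h₁).1
      have hmem₂ : η₂ ∈ P := (mem_filter.mp h₂).1
      have hzz : ∀ z, z ≠ y → z ≠ w → η₁ z = η₂ z := by
        intro z h1 h2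
        have h3 : (if z = y ∨ z = w then 0 else η₁ z)
            = (if z = y ∨ z = w then 0 else η₂ z) := congrFun hproj z
        rw [if_neg (by tauto), if_neg (by tauto)] at h3
        exact h3
      have hxx : η₁ x = η₂ x := hzz x hxy (Ne.symm hwx)
      have hyy : η₁ y = η₂ y := by
        have e₁ := hsum η₁ hmem₁
        have e₂ := hsum η₂ hmem₂
        omega
      have hww : η₁ w = η₂ w := by
        have e₁ := hRsum η₁ hmem₁
        have e₂ := hRsum η₂ hmem₂
        have hs₁ : η₁ w + ∑ z ∈ R.erase w, η₁ z = ∑ z ∈ R, η₁ z :=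
          Finset.add_sum_erase R η₁ hw
        have hs₂ : η₂ w + ∑ z ∈ R.erase w, η₂ z = ∑ z ∈ R, η₂ z :=
          Finset.add_sum_erase R η₂ hw
        have heq : ∑ z ∈ R.erase w, η₁ z = ∑ z ∈ R.erase w, η₂ z := by
          apply sum_congr rfl
          intro z hz
          have hz1 : z ≠ w := (mem_erase.mp hz).1
          have hz2 : z ≠ y := ((hmemR z).mp (mem_erase.mp hz).2).1
          exact hzz z hz2 hz1
        omega
      funext z
      by_cases hzy : z = y
      · subst hzy; exact hyy
      by_cases hzw : z = w
      · subst hzw; exact hww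
      exact hzz z hzy hzw
    have hmaster : ∑ η ∈ A w, ∏ z ∈ T, g z (η z)
        ≤ ∏ z ∈ T, ∑ n ∈ range (N+1), g z n := by
      rw [hTdef]
      apply master_proj N y w (Ne.symm hwy) (A w)
        (fun η hη z => ((hconf η (mem_filter.mp hη).1).1 z)) _ g hgnn
      intro η₁ h₁ η₂ h₂ hproj
      exact hinj η₁ h₁ η₂ h₂ hproj
    have hprodb : ∏ z ∈ T, ∑ n ∈ range (N+1), g z n
        ≤ 2 * (ε*N) ^ (1-α) * 3 ^ s := by
      calc ∏ z ∈ T, ∑ n ∈ range (N+1), g z n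
          ≤ ∏ z ∈ T, (if z = x then 2 * (ε*N) ^ (1-α) else (3:ℝ)) := by
            apply Finset.prod_le_prod (fun z _ => sum_nonneg (fun n _ => hgnn z n))
            intro z _
            by_cases hzx : z = x
            · subst hzx
              rw [if_pos rfl]
              have heq : ∀ n : ℕ, g z n = (if ε*N ≤ (n:ℝ) then ((n:ℝ)) ^ (-α) else 0) := by
                intro n
                simp only [hgdef, if_pos rfl]
              calc ∑ n ∈ range (N+1), g z n
                  = ∑ n ∈ range (N+1), (if ε*N ≤ (n:ℝ) then ((n:ℝ)) ^ (-α) else 0) :=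
                    sum_congr rfl (fun n _ => heq n)
                _ ≤ 2 * (ε*N) ^ (1-α) := tail_sum_real hα.le hεN1 N
            · rw [if_neg hzx]
              have heq : ∀ n : ℕ, g z n = FF α mstar z n := by
                intro n
                simp only [hgdef, if_neg hzx]
              calc ∑ n ∈ range (N+1), g z n
                  = ∑ n ∈ range (N+1), FF α mstar z n :=
                    sum_congr rfl (fun n _ => heq n)
                _ ≤ 3 := sum_FF_le_three hα.le hms0 hms1 z N
        _ ≤ 2 * (ε*N) ^ (1-α) * 3 ^ s := by
            rw [hsdef]
            exact prod_ite_le T x hxT _ (by positivity)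
    calc ∑ η ∈ A w, ∏ z, FF α mstar z (η z)
        ≤ ∑ η ∈ A w, ((ε*N) ^ (-α) * (((π:ℝ)/(s:ℝ)) ^ (-α) * ∏ z ∈ T, g z (η z))) :=
          sum_le_sum hpt
      _ = (ε*N) ^ (-α) * (((π:ℝ)/(s:ℝ)) ^ (-α) * ∑ η ∈ A w, ∏ z ∈ T, g z (η z)) := by
          rw [← Finset.mul_sum, ← Finset.mul_sum]
      _ ≤ (ε*N) ^ (-α) * (((π:ℝ)/(s:ℝ)) ^ (-α) * (2 * (ε*N) ^ (1-α) * 3 ^ s)) := by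
          apply mul_le_mul_of_nonneg_left _ (by positivity)
          apply mul_le_mul_of_nonneg_left _ (by positivity)
          exact le_trans hmaster hprodb
  -- combine
  have hB0 : (0:ℝ) ≤ (ε*N) ^ (-α) * (((π:ℝ)/(s:ℝ)) ^ (-α) * (2 * (ε*N) ^ (1-α) * 3 ^ s)) := by
    positivity
  calc ∑ η ∈ P, ∏ z, FF α mstar z (η z)
      ≤ ∑ w ∈ R, ∑ η ∈ A w, ∏ z, FF α mstar z (η z) := hsplit
    _ ≤ R.card • ((ε*N) ^ (-α) * (((π:ℝ)/(s:ℝ)) ^ (-α) * (2 * (ε*N) ^ (1-α) * 3 ^ s))) :=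
        Finset.sum_le_card_nsmul R _ _ hwbound
    _ ≤ (s:ℝ) * ((ε*N) ^ (-α) * (((π:ℝ)/(s:ℝ)) ^ (-α) * (2 * (ε*N) ^ (1-α) * 3 ^ s))) := by
        rw [nsmul_eq_mul]
        apply mul_le_mul_of_nonneg_right _ hB0
        have : R.card ≤ s := by
          rw [hsdef, ← card_univ]
          exact card_le_card (subset_univ R)
        exact_mod_cast this

set_option maxHeartbeats 1000000 in
lemma Dpiece {S : Type*} [Fintype S] {α ε δ : ℝ} (hα : 2 < α) (hε : 0 < ε) (hε8 : ε < 1/8)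
    {mstar : S → ℝ} (hms0 : ∀ z, 0 < mstar z) (hms1 : ∀ z, mstar z ≤ 1)
    (Sstar : Finset S) (hδ : ∀ z, z ∉ Sstar → mstar z ≤ δ) (hδ0 : 0 < δ) (hδ1 : δ < 1)
    (N c : ℕ) (hc : c ≤ 1) (x : S)
    (P : Finset (S → ℕ)) (hPc : P ⊆ configs S N)
    (hxval : ∀ η ∈ P, η x + c = ⌈(N:ℝ)*(1-2*ε)⌉₊)
    (hTt : ∀ η ∈ P, ∀ y ∈ Sstar.erase x, ¬ (N ≤ η x + η y + piZR α N))
    (hπs : Fintype.card S ≤ piZR α N)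
    (hπε : ((piZR α N : ℝ)) + 1 ≤ ε * N)
    (hN4 : 4 ≤ N) :
    ∑ η ∈ P, ∏ z, FF α mstar z (η z)
      ≤ (Fintype.card S : ℝ) * (((N:ℝ)/2) ^ (-α)
            * ((δ ^ (ε/(Fintype.card S : ℝ))) ^ N * 3 ^ (Fintype.card S)))
        + ((Fintype.card S : ℝ)) ^ 2 * (((N:ℝ)/2) ^ (-α) * ((ε*(N:ℝ)/(Fintype.card S : ℝ)) ^ (-α)
            * (2 * (((piZR α N:ℝ))/(Fintype.card S : ℝ)) ^ (1-α) * 3 ^ (Fintype.card S)))) := by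
  classical
  have hα0 : (0:ℝ) ≤ α := by linarith
  set s := Fintype.card S with hsdef
  set π := piZR α N with hπdef
  have hs1 : 1 ≤ s := @Fintype.card_pos S _ ⟨x⟩
  have hs0 : (0:ℝ) < (s:ℝ) := by exact_mod_cast hs1
  have hπ1 : 1 ≤ π := le_trans hs1 hπs
  have hπ0 : (0:ℝ) ≤ (π:ℝ) := by positivity
  have hεN1 : (1:ℝ) ≤ ε*N := by linarith
  have hεN0 : (0:ℝ) < ε*N := by linarith
  have hπs' : (1:ℝ) ≤ (π:ℝ)/(s:ℝ) := by
    rw [le_div_iff₀ hs0, one_mul]; exact_mod_cast hπs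
  have hπsdiv0 : (0:ℝ) < (π:ℝ)/(s:ℝ) := by linarith
  have hεNs1 : (1:ℝ) ≤ ε*(N:ℝ)/(s:ℝ) := by
    rw [le_div_iff₀ hs0, one_mul]
    have hsπ : (s:ℝ) ≤ (π:ℝ) := by exact_mod_cast hπs
    linarith
  have hεNs0 : (0:ℝ) < ε*(N:ℝ)/(s:ℝ) := by linarith
  have hN0 : (0:ℝ) < (N:ℝ) := by
    have : (4:ℝ) ≤ (N:ℝ) := by exact_mod_cast hN4
    linarith
  have hN2 : (1:ℝ) ≤ (N:ℝ)/2 := by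
    have : (4:ℝ) ≤ (N:ℝ) := by exact_mod_cast hN4
    linarith
  have hN20 : (0:ℝ) < (N:ℝ)/2 := by linarith
  set ρ : ℝ := δ ^ (ε/(s:ℝ)) with hρdef
  have hconf : ∀ η ∈ P, (∀ z, η z ≤ N) ∧ ∑ z, η z = N :=
    fun η hη => mem_configs_iff.mp (hPc hη)
  set R : Finset S := univ.erase x with hRdef
  have hmemR : ∀ z, z ∈ R ↔ z ≠ x := by
    intro z; simp [hRdef, mem_erase]
  have hRsum : ∀ η ∈ P, η x + ∑ z ∈ R, η z = N := by
    intro η hη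
    rw [hRdef, Finset.add_sum_erase univ η (mem_univ x)]
    exact (hconf η hη).2
  -- bounds on η x
  have hηx : ∀ η ∈ P, (N:ℝ)/2 ≤ ((η x : ℕ):ℝ) ∧ ((η x : ℕ):ℝ) ≤ (N:ℝ)*(1-2*ε) + 1 := by
    intro η hη
    have h1 := hxval η hη
    have hcl : (N:ℝ)*(1-2*ε) ≤ (⌈(N:ℝ)*(1-2*ε)⌉₊:ℝ) := Nat.le_ceil _
    have hcu : (⌈(N:ℝ)*(1-2*ε)⌉₊:ℝ) < (N:ℝ)*(1-2*ε) + 1 :=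
      Nat.ceil_lt_add_one (by nlinarith)
    have hcast : ((η x:ℕ):ℝ) + (c:ℝ) = (⌈(N:ℝ)*(1-2*ε)⌉₊:ℝ) := by exact_mod_cast h1
    have hc1 : (c:ℝ) ≤ 1 := by exact_mod_cast hc
    have hc0 : (0:ℝ) ≤ (c:ℝ) := by positivity
    have hN' : (4:ℝ) ≤ (N:ℝ) := by exact_mod_cast hN4
    constructor
    · nlinarith
    · nlinarith
  -- lower bound on the rest
  have hK : ∀ η ∈ P, ε*(N:ℝ) ≤ ((∑ z ∈ R, η z : ℕ):ℝ) := by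
    intro η hη
    have h1 := hRsum η hη
    have hcast : ((η x:ℕ):ℝ) + ((∑ z ∈ R, η z : ℕ):ℝ) = (N:ℝ) := by exact_mod_cast h1
    have h2 := (hηx η hη).2
    nlinarith
  -- covering
  set A1 : S → Finset (S → ℕ) := fun w => P.filter (fun η' => ε*(N:ℝ) ≤ (s:ℝ)*(η' w : ℕ))
    with hA1def
  set A2 : S → S → Finset (S → ℕ) := fun w v => P.filter
    (fun η' => (ε*(N:ℝ) ≤ (s:ℝ)*(η' w : ℕ)) ∧ ((π:ℝ) ≤ (s:ℝ)*(η' v : ℕ))) with hA2def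
  have hcov : ∀ η ∈ P, (∃ w ∈ R \ Sstar, η ∈ A1 w)
      ∨ (∃ w ∈ R, ∃ v ∈ R.erase w, η ∈ A2 w v) := by
    intro η hη
    -- find w
    have hKη := hK η hη
    have hK1 : 1 ≤ ∑ z ∈ R, η z := by
      by_contra h
      push_neg at h
      have h0 : (∑ z ∈ R, η z) = 0 := by omega
      rw [h0] at hKη
      norm_num at hKη
      linarith
    have hRne : R.Nonempty := by
      rcases Finset.eq_empty_or_nonempty R with h | h
      · exfalso; rw [h, sum_empty] at hK1; omega
      · exact h
    have hsum1 : ∑ w ∈ R, (∑ z ∈ R, η z) ≤ ∑ w ∈ R, R.card * η w := by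
      rw [sum_const, ← Finset.mul_sum, smul_eq_mul]
    obtain ⟨w, hw, hle⟩ := Finset.exists_le_of_sum_le hRne hsum1
    have hRcard : R.card ≤ s := by
      rw [hsdef, ← card_univ]; exact card_le_card (subset_univ R)
    have hwbig : ε*(N:ℝ) ≤ (s:ℝ)*(η w : ℕ) := by
      have h2 : ∑ z ∈ R, η z ≤ s * η w := le_trans hle (Nat.mul_le_mul_right _ hRcard)
      have h3 : ((∑ z ∈ R, η z : ℕ):ℝ) ≤ (s:ℝ)*(η w:ℕ) := by exact_mod_cast h2
      linarith
    by_cases hwS : w ∈ Sstar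
    · -- case 2
      right
      refine ⟨w, hw, ?_⟩
      have hwx : w ≠ x := (hmemR w).mp hw
      have hTw := hTt η hη w (mem_erase.mpr ⟨hwx, hwS⟩)
      push_neg at hTw
      have hsw : η x + (η w + ∑ z ∈ (R.erase w), η z) = N := by
        rw [Finset.add_sum_erase R η hw]
        exact hRsum η hη
      have hrest : π + 1 ≤ ∑ z ∈ R.erase w, η z := by omega
      have hRwne : (R.erase w).Nonempty := by
        rcases Finset.eq_empty_or_nonempty (R.erase w) with h | h
        · exfalso; rw [h, sum_empty] at hrest; omega
        · exact h
      have hsum2 : ∑ v ∈ R.erase w, (∑ z ∈ R.erase w, η z)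
          ≤ ∑ v ∈ R.erase w, (R.erase w).card * η v := by
        rw [sum_const, ← Finset.mul_sum, smul_eq_mul]
      obtain ⟨v, hv, hlev⟩ := Finset.exists_le_of_sum_le hRwne hsum2
      refine ⟨v, hv, ?_⟩
      have hRwcard : (R.erase w).card ≤ s := by
        rw [hsdef, ← card_univ]; exact card_le_card (subset_univ _)
      have hvbig : (π:ℝ) ≤ (s:ℝ)*(η v : ℕ) := by
        have h2 : π + 1 ≤ s * η v :=
          le_trans hrest (le_trans hlev (Nat.mul_le_mul_right _ hRwcard))
        have h3 : ((π:ℕ):ℝ) + 1 ≤ (s:ℝ)*(η v:ℕ) := by exact_mod_cast h2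
        linarith
      rw [hA2def]
      exact mem_filter.mpr ⟨hη, hwbig, hvbig⟩
    · left
      exact ⟨w, mem_sdiff.mpr ⟨hw, hwS⟩, mem_filter.mpr ⟨hη, hwbig⟩⟩
  have hFnn : ∀ η : S → ℕ, 0 ≤ ∏ z, FF α mstar z (η z) :=
    fun η => prod_nonneg (fun z _ => (FF_pos hms0 z (η z)).le)
  -- split the sum
  have hsplit : ∑ η ∈ P, ∏ z, FF α mstar z (η z)
      ≤ (∑ w ∈ R \ Sstar, ∑ η ∈ A1 w, ∏ z, FF α mstar z (η z))
        + ∑ w ∈ R, ∑ v ∈ R.erase w, ∑ η ∈ A2 w v, ∏ z, FF α mstar z (η z) := by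
    have hsub : P ⊆ (R \ Sstar).biUnion A1
        ∪ R.biUnion (fun w => (R.erase w).biUnion (A2 w)) := by
      intro η hη
      rcases hcov η hη with ⟨w, hw, hA⟩ | ⟨w, hw, v, hv, hA⟩
      · exact mem_union_left _ (mem_biUnion.mpr ⟨w, hw, hA⟩)
      · exact mem_union_right _ (mem_biUnion.mpr ⟨w, hw, mem_biUnion.mpr ⟨v, hv, hA⟩⟩)
    calc ∑ η ∈ P, ∏ z, FF α mstar z (η z)
        ≤ ∑ η ∈ ((R \ Sstar).biUnion A1
            ∪ R.biUnion (fun w => (R.erase w).biUnion (A2 w))), ∏ z, FF α mstar z (η z) :=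
          sum_le_sum_of_subset_of_nonneg hsub (fun η _ _ => hFnn η)
      _ ≤ (∑ η ∈ (R \ Sstar).biUnion A1, ∏ z, FF α mstar z (η z))
            + ∑ η ∈ R.biUnion (fun w => (R.erase w).biUnion (A2 w)),
                ∏ z, FF α mstar z (η z) :=
          sum_union_le_real _ _ _ hFnn
      _ ≤ _ := by
          apply add_le_add
          · exact sum_biUnion_le_real _ _ _ hFnn
          · calc ∑ η ∈ R.biUnion (fun w => (R.erase w).biUnion (A2 w)),
                  ∏ z, FF α mstar z (η z)
                ≤ ∑ w ∈ R, ∑ η ∈ (R.erase w).biUnion (A2 w), ∏ z, FF α mstar z (η z) :=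
                  sum_biUnion_le_real _ _ _ hFnn
              _ ≤ _ := by
                  apply sum_le_sum
                  intro w _
                  exact sum_biUnion_le_real _ _ _ hFnn
  set B1 : ℝ := ((N:ℝ)/2) ^ (-α) * (ρ ^ N * 3 ^ s) with hB1def
  set B2 : ℝ := ((N:ℝ)/2) ^ (-α) * ((ε*(N:ℝ)/(s:ℝ)) ^ (-α)
      * (2 * (((π:ℕ):ℝ)/(s:ℝ)) ^ (1-α) * 3 ^ s)) with hB2def
  have hρ0 : 0 ≤ ρ := Real.rpow_nonneg hδ0.le _
  have hB10 : 0 ≤ B1 := by rw [hB1def]; positivity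
  have hB20 : 0 ≤ B2 := by rw [hB2def]; positivity
  -- case 1 bound
  have hcase1 : ∀ w ∈ R \ Sstar, ∑ η ∈ A1 w, ∏ z, FF α mstar z (η z) ≤ B1 := by
    intro w hw'
    obtain ⟨hw, hwS⟩ := mem_sdiff.mp hw'
    have hwx : w ≠ x := (hmemR w).mp hw
    set T : Finset S := (univ.erase x).erase w with hTdef
    have hpt : ∀ η ∈ A1 w, ∏ z, FF α mstar z (η z)
        ≤ ((N:ℝ)/2) ^ (-α) * (ρ ^ N * ∏ z ∈ T, FF α mstar z (η z)) := by
      intro η hηA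
      have hηP : η ∈ P := (mem_filter.mp hηA).1
      have hwcond : ε*(N:ℝ) ≤ (s:ℝ)*((η w:ℕ):ℝ) := by
        have := (mem_filter.mp hηA).2
        exact_mod_cast this
      have e1 : ∏ z, FF α mstar z (η z)
          = FF α mstar x (η x) * (FF α mstar w (η w)
            * ∏ z ∈ T, FF α mstar z (η z)) := by
        rw [hTdef, ← Finset.mul_prod_erase univ (fun z => FF α mstar z (η z)) (mem_univ x),
          ← Finset.mul_prod_erase (univ.erase x) _ (mem_erase.mpr ⟨hwx, mem_univ w⟩)]
      have t1 : FF α mstar x (η x) ≤ ((N:ℝ)/2) ^ (-α) :=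
        FF_le_const hα0 hms0 hms1 x hN20 (hηx η hηP).1 hN2
      have hηw : ε*(N:ℝ)/(s:ℝ) ≤ ((η w:ℕ):ℝ) := by
        rw [div_le_iff₀ hs0]
        linarith [hwcond]
      have t2 : FF α mstar w (η w) ≤ ρ ^ N := by
        calc FF α mstar w (η w) ≤ mstar w ^ (η w) := FF_le_pow hα0 hms0 w _
          _ ≤ δ ^ (η w) := pow_le_pow_left₀ (hms0 w).le (hδ w hwS) _
          _ = δ ^ (((η w):ℕ):ℝ) := (Real.rpow_natCast δ _).symm
          _ ≤ δ ^ (ε*(N:ℝ)/(s:ℝ)) := Real.rpow_le_rpow_of_exponent_ge hδ0 hδ1.le hηw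
          _ = ρ ^ N := by
              rw [hρdef, ← Real.rpow_natCast (δ ^ (ε/(s:ℝ))) N, ← Real.rpow_mul hδ0.le]
              congr 1
              ring
      have hFFnn : (0:ℝ) ≤ ∏ z ∈ T, FF α mstar z (η z) :=
        prod_nonneg (fun z _ => (FF_pos hms0 z (η z)).le)
      rw [e1]
      apply mul_le_mul t1 _ _ (by positivity)
      · exact mul_le_mul t2 le_rfl hFFnn (by positivity)
      · exact mul_nonneg (FF_pos (α := α) hms0 w (η w)).le hFFnn
    have hinj : ∀ η₁ ∈ A1 w, ∀ η₂ ∈ A1 w,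
        (fun z : S => if z = x ∨ z = w then 0 else η₁ z)
          = (fun z : S => if z = x ∨ z = w then 0 else η₂ z) → η₁ = η₂ := by
      intro η₁ h₁ η₂ h₂ hproj
      have hmem₁ : η₁ ∈ P := (mem_filter.mp h₁).1
      have hmem₂ : η₂ ∈ P := (mem_filter.mp h₂).1
      have hzz : ∀ z, z ≠ x → z ≠ w → η₁ z = η₂ z := by
        intro z h1 h2
        have h3 : (if z = x ∨ z = w then 0 else η₁ z)
            = (if z = x ∨ z = w then 0 else η₂ z) := congrFun hproj z
        rw [if_neg (by tauto), if_neg (by tauto)] at h3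
        exact h3
      have hxx : η₁ x = η₂ x := by
        have e₁ := hxval η₁ hmem₁
        have e₂ := hxval η₂ hmem₂
        omega
      have hww : η₁ w = η₂ w := by
        have e₁ := hRsum η₁ hmem₁
        have e₂ := hRsum η₂ hmem₂
        have hs₁ : η₁ w + ∑ z ∈ R.erase w, η₁ z = ∑ z ∈ R, η₁ z :=
          Finset.add_sum_erase R η₁ hw
        have hs₂ : η₂ w + ∑ z ∈ R.erase w, η₂ z = ∑ z ∈ R, η₂ z :=
          Finset.add_sum_erase R η₂ hw
        have heq : ∑ z ∈ R.erase w, η₁ z = ∑ z ∈ R.erase w, η₂ z := by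
          apply sum_congr rfl
          intro z hz
          exact hzz z ((hmemR z).mp (mem_erase.mp hz).2) (mem_erase.mp hz).1
        omega
      funext z
      by_cases hzx : z = x
      · subst hzx; exact hxx
      by_cases hzw : z = w
      · subst hzw; exact hww
      exact hzz z hzx hzw
    have hmaster : ∑ η ∈ A1 w, ∏ z ∈ T, FF α mstar z (η z)
        ≤ ∏ z ∈ T, ∑ n ∈ range (N+1), FF α mstar z n := by
      rw [hTdef]
      exact master_proj N x w (Ne.symm hwx) (A1 w)
        (fun η hη z => ((hconf η (mem_filter.mp hη).1).1 z)) hinj _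
        (fun z n => (FF_pos hms0 z n).le)
    have hprodb : ∏ z ∈ T, ∑ n ∈ range (N+1), FF α mstar z n ≤ 3 ^ s := by
      calc ∏ z ∈ T, ∑ n ∈ range (N+1), FF α mstar z n
          ≤ ∏ _z ∈ T, (3:ℝ) := by
            apply Finset.prod_le_prod
            · intro z _
              exact sum_nonneg (fun n _ => (FF_pos hms0 z n).le)
            · intro z _
              exact sum_FF_le_three hα.le hms0 hms1 z N
        _ ≤ 3 ^ s := by rw [hsdef]; exact prod_const_le T
    calc ∑ η ∈ A1 w, ∏ z, FF α mstar z (η z)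
        ≤ ∑ η ∈ A1 w, (((N:ℝ)/2) ^ (-α) * (ρ ^ N * ∏ z ∈ T, FF α mstar z (η z))) :=
          sum_le_sum hpt
      _ = ((N:ℝ)/2) ^ (-α) * (ρ ^ N * ∑ η ∈ A1 w, ∏ z ∈ T, FF α mstar z (η z)) := by
          rw [← Finset.mul_sum, ← Finset.mul_sum]
      _ ≤ B1 := by
          rw [hB1def]
          apply mul_le_mul_of_nonneg_left _ (by positivity)
          apply mul_le_mul_of_nonneg_left _ (by positivity)
          exact le_trans hmaster hprodb
  -- case 2 bound
  have hcase2 : ∀ w ∈ R, ∀ v ∈ R.erase w,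
      ∑ η ∈ A2 w v, ∏ z, FF α mstar z (η z) ≤ B2 := by
    intro w hw v hv
    have hwx : w ≠ x := (hmemR w).mp hw
    have hvw : v ≠ w := (mem_erase.mp hv).1
    have hvx : v ≠ x := (hmemR v).mp (mem_erase.mp hv).2
    set T : Finset S := (univ.erase x).erase w with hTdef
    have hvT : v ∈ T := by
      rw [hTdef, mem_erase, mem_erase]
      exact ⟨hvw, hvx, mem_univ v⟩
    set g : S → ℕ → ℝ := fun z n =>
      if z = v then (if ((π:ℕ):ℝ)/(s:ℝ) ≤ (n:ℝ) then ((n:ℝ)) ^ (-α) else 0)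
      else FF α mstar z n with hgdef
    have hgnn : ∀ z n, 0 ≤ g z n := by
      intro z n
      rw [hgdef]
      dsimp only
      split
      · split
        · positivity
        · exact le_refl 0
      · exact (FF_pos hms0 z n).le
    have hpt : ∀ η ∈ A2 w v, ∏ z, FF α mstar z (η z)
        ≤ ((N:ℝ)/2) ^ (-α) * ((ε*(N:ℝ)/(s:ℝ)) ^ (-α) * ∏ z ∈ T, g z (η z)) := by
      intro η hηA
      have hηP : η ∈ P := (mem_filter.mp hηA).1
      obtain ⟨hwcond, hvcond⟩ := (mem_filter.mp hηA).2
      have hwcond' : ε*(N:ℝ) ≤ (s:ℝ)*((η w:ℕ):ℝ) := by exact_mod_cast hwcond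
      have hvcond' : ((π:ℕ):ℝ) ≤ (s:ℝ)*((η v:ℕ):ℝ) := by exact_mod_cast hvcond
      have e1 : ∏ z, FF α mstar z (η z)
          = FF α mstar x (η x) * (FF α mstar w (η w)
            * ∏ z ∈ T, FF α mstar z (η z)) := by
        rw [hTdef, ← Finset.mul_prod_erase univ (fun z => FF α mstar z (η z)) (mem_univ x),
          ← Finset.mul_prod_erase (univ.erase x) _ (mem_erase.mpr ⟨hwx, mem_univ w⟩)]
      have t1 : FF α mstar x (η x) ≤ ((N:ℝ)/2) ^ (-α) :=
        FF_le_const hα0 hms0 hms1 x hN20 (hηx η hηP).1 hN2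
      have hηw : ε*(N:ℝ)/(s:ℝ) ≤ ((η w:ℕ):ℝ) := by
        rw [div_le_iff₀ hs0]
        linarith [hwcond']
      have t2 : FF α mstar w (η w) ≤ (ε*(N:ℝ)/(s:ℝ)) ^ (-α) :=
        FF_le_const hα0 hms0 hms1 w hεNs0 hηw hεNs1
      have hηv : ((π:ℕ):ℝ)/(s:ℝ) ≤ ((η v:ℕ):ℝ) := by
        rw [div_le_iff₀ hs0]
        linarith [hvcond']
      have t3 : ∏ z ∈ T, FF α mstar z (η z) ≤ ∏ z ∈ T, g z (η z) := by
        apply Finset.prod_le_prod (fun z _ => (FF_pos hms0 z (η z)).le)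
        intro z _
        by_cases hzv : z = v
        · subst hzv
          have hη1 : 1 ≤ η z := by
            have : (1:ℝ) ≤ ((η z:ℕ):ℝ) := le_trans hπs' hηv
            exact_mod_cast this
          simp only [hgdef, if_pos rfl]
          rw [if_pos hηv]
          exact FF_le_rpow hα0 hms0 hms1 z hη1
        · simp only [hgdef]
          rw [if_neg hzv]
      have hFFnn : (0:ℝ) ≤ ∏ z ∈ T, FF α mstar z (η z) :=
        prod_nonneg (fun z _ => (FF_pos hms0 z (η z)).le)
      rw [e1]
      apply mul_le_mul t1 _ _ (by positivity)
      · apply mul_le_mul t2 t3 hFFnn (by positivity)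
      · exact mul_nonneg (FF_pos (α := α) hms0 w (η w)).le hFFnn
    have hinj : ∀ η₁ ∈ A2 w v, ∀ η₂ ∈ A2 w v,
        (fun z : S => if z = x ∨ z = w then 0 else η₁ z)
          = (fun z : S => if z = x ∨ z = w then 0 else η₂ z) → η₁ = η₂ := by
      intro η₁ h₁ η₂ h₂ hproj
      have hmem₁ : η₁ ∈ P := (mem_filter.mp h₁).1
      have hmem₂ : η₂ ∈ P := (mem_filter.mp h₂).1
      have hzz : ∀ z, z ≠ x → z ≠ w → η₁ z = η₂ z := by
        intro z h1 h2
        have h3 : (if z = x ∨ z = w then 0 else η₁ z)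
            = (if z = x ∨ z = w then 0 else η₂ z) := congrFun hproj z
        rw [if_neg (by tauto), if_neg (by tauto)] at h3
        exact h3
      have hxx : η₁ x = η₂ x := by
        have e₁ := hxval η₁ hmem₁
        have e₂ := hxval η₂ hmem₂
        omega
      have hww : η₁ w = η₂ w := by
        have e₁ := hRsum η₁ hmem₁
        have e₂ := hRsum η₂ hmem₂
        have hs₁ : η₁ w + ∑ z ∈ R.erase w, η₁ z = ∑ z ∈ R, η₁ z :=
          Finset.add_sum_erase R η₁ hw
        have hs₂ : η₂ w + ∑ z ∈ R.erase w, η₂ z = ∑ z ∈ R, η₂ z :=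
          Finset.add_sum_erase R η₂ hw
        have heq : ∑ z ∈ R.erase w, η₁ z = ∑ z ∈ R.erase w, η₂ z := by
          apply sum_congr rfl
          intro z hz
          exact hzz z ((hmemR z).mp (mem_erase.mp hz).2) (mem_erase.mp hz).1
        omega
      funext z
      by_cases hzx : z = x
      · subst hzx; exact hxx
      by_cases hzw : z = w
      · subst hzw; exact hww
      exact hzz z hzx hzw
    have hmaster : ∑ η ∈ A2 w v, ∏ z ∈ T, g z (η z)
        ≤ ∏ z ∈ T, ∑ n ∈ range (N+1), g z n := by
      rw [hTdef]
      exact master_proj N x w (Ne.symm hwx) (A2 w v)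
        (fun η hη z => ((hconf η (mem_filter.mp hη).1).1 z)) hinj g hgnn
    have hprodb : ∏ z ∈ T, ∑ n ∈ range (N+1), g z n
        ≤ 2 * (((π:ℕ):ℝ)/(s:ℝ)) ^ (1-α) * 3 ^ s := by
      calc ∏ z ∈ T, ∑ n ∈ range (N+1), g z n
          ≤ ∏ z ∈ T, (if z = v then 2 * (((π:ℕ):ℝ)/(s:ℝ)) ^ (1-α) else (3:ℝ)) := by
            apply Finset.prod_le_prod (fun z _ => sum_nonneg (fun n _ => hgnn z n))
            intro z _
            by_cases hzv : z = v
            · subst hzv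
              rw [if_pos rfl]
              calc ∑ n ∈ range (N+1), g z n
                  = ∑ n ∈ range (N+1),
                      (if ((π:ℕ):ℝ)/(s:ℝ) ≤ (n:ℝ) then ((n:ℝ)) ^ (-α) else 0) := by
                    apply sum_congr rfl
                    intro n _
                    simp only [hgdef, if_pos rfl]
                _ ≤ 2 * (((π:ℕ):ℝ)/(s:ℝ)) ^ (1-α) := tail_sum_real hα.le hπs' N
            · rw [if_neg hzv]
              calc ∑ n ∈ range (N+1), g z n
                  = ∑ n ∈ range (N+1), FF α mstar z n := by
                    apply sum_congr rfl
                    intro n _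
                    simp only [hgdef, if_neg hzv]
                _ ≤ 3 := sum_FF_le_three hα.le hms0 hms1 z N
        _ ≤ 2 * (((π:ℕ):ℝ)/(s:ℝ)) ^ (1-α) * 3 ^ s := by
            rw [hsdef]
            exact prod_ite_le T v hvT _ (by positivity)
    calc ∑ η ∈ A2 w v, ∏ z, FF α mstar z (η z)
        ≤ ∑ η ∈ A2 w v, (((N:ℝ)/2) ^ (-α)
            * ((ε*(N:ℝ)/(s:ℝ)) ^ (-α) * ∏ z ∈ T, g z (η z))) :=
          sum_le_sum hpt
      _ = ((N:ℝ)/2) ^ (-α) * ((ε*(N:ℝ)/(s:ℝ)) ^ (-α)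
            * ∑ η ∈ A2 w v, ∏ z ∈ T, g z (η z)) := by
          rw [← Finset.mul_sum, ← Finset.mul_sum]
      _ ≤ B2 := by
          rw [hB2def]
          apply mul_le_mul_of_nonneg_left _ (by positivity)
          apply mul_le_mul_of_nonneg_left _ (by positivity)
          exact le_trans hmaster hprodb
  -- conclude
  have hfin1 : ∑ w ∈ R \ Sstar, ∑ η ∈ A1 w, ∏ z, FF α mstar z (η z) ≤ (s:ℝ) * B1 := by
    calc ∑ w ∈ R \ Sstar, ∑ η ∈ A1 w, ∏ z, FF α mstar z (η z)
        ≤ (R \ Sstar).card • B1 := Finset.sum_le_card_nsmul _ _ _ hcase1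
      _ ≤ (s:ℝ) * B1 := by
          rw [nsmul_eq_mul]
          apply mul_le_mul_of_nonneg_right _ hB10
          have : (R \ Sstar).card ≤ s := by
            rw [hsdef, ← card_univ]; exact card_le_card (subset_univ _)
          exact_mod_cast this
  have hfin2 : ∑ w ∈ R, ∑ v ∈ R.erase w, ∑ η ∈ A2 w v, ∏ z, FF α mstar z (η z)
      ≤ ((s:ℝ)) ^ 2 * B2 := by
    have hinner : ∀ w ∈ R, ∑ v ∈ R.erase w, ∑ η ∈ A2 w v, ∏ z, FF α mstar z (η z)
        ≤ (s:ℝ) * B2 := by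
      intro w hw
      calc ∑ v ∈ R.erase w, ∑ η ∈ A2 w v, ∏ z, FF α mstar z (η z)
          ≤ (R.erase w).card • B2 := Finset.sum_le_card_nsmul _ _ _ (hcase2 w hw)
        _ ≤ (s:ℝ) * B2 := by
            rw [nsmul_eq_mul]
            apply mul_le_mul_of_nonneg_right _ hB20
            have : (R.erase w).card ≤ s := by
              rw [hsdef, ← card_univ]; exact card_le_card (subset_univ _)
            exact_mod_cast this
    calc ∑ w ∈ R, ∑ v ∈ R.erase w, ∑ η ∈ A2 w v, ∏ z, FF α mstar z (η z)
        ≤ R.card • ((s:ℝ) * B2) := Finset.sum_le_card_nsmul _ _ _ hinner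
      _ ≤ ((s:ℝ)) ^ 2 * B2 := by
          rw [nsmul_eq_mul]
          have hc : (R.card : ℝ) ≤ (s:ℝ) := by
            have : R.card ≤ s := by
              rw [hsdef, ← card_univ]; exact card_le_card (subset_univ _)
            exact_mod_cast this
          have hsB : 0 ≤ (s:ℝ) * B2 := mul_nonneg hs0.le hB20
          calc (R.card:ℝ) * ((s:ℝ) * B2) ≤ (s:ℝ) * ((s:ℝ) * B2) :=
                mul_le_mul_of_nonneg_right hc hsB
            _ = ((s:ℝ)) ^ 2 * B2 := by ring
  calc ∑ η ∈ P, ∏ z, FF α mstar z (η z)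
      ≤ (∑ w ∈ R \ Sstar, ∑ η ∈ A1 w, ∏ z, FF α mstar z (η z))
        + ∑ w ∈ R, ∑ v ∈ R.erase w, ∑ η ∈ A2 w v, ∏ z, FF α mstar z (η z) := hsplit
    _ ≤ (s:ℝ) * B1 + ((s:ℝ)) ^ 2 * B2 := add_le_add hfin1 hfin2


lemma floor_half {x : ℝ} (hx : 2 ≤ x) : x/2 ≤ (⌊x⌋₊:ℝ) := by
  have h1 : x - 1 < (⌊x⌋₊:ℝ) := Nat.sub_one_lt_floor x
  linarith

lemma algJ {α ε : ℝ} (hα : 2 < α) (hε : 0 < ε) {N π : ℕ}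
    (hN1 : (1:ℝ) ≤ (N:ℝ)) (hπx : ((N:ℝ)^(1/α+1/2))/2 ≤ (π:ℝ)) {sR : ℝ} (hs : 1 ≤ sR)
    (k : ℕ) :
    (N:ℝ)^(1+α) * ((N:ℝ)^α * (sR * ((ε*(N:ℝ))^(-α) * (((π:ℝ)/sR)^(-α)
        * (2*(ε*(N:ℝ))^(1-α)*(3:ℝ)^k)))))
      ≤ (sR^(1+α) * (ε^(1-2*α) * (2^(1+α) * 3^k))) * (N:ℝ)^(1-α/2) := by
  have hN0 : (0:ℝ) < (N:ℝ) := by linarith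
  have hs0 : (0:ℝ) < sR := by linarith
  have hαne : α ≠ 0 := by linarith
  have hx0 : (0:ℝ) < (N:ℝ)^(1/α+1/2) := Real.rpow_pos_of_pos hN0 _
  have hπ0 : (0:ℝ) < (π:ℝ) := by linarith
  have h1 : (ε*(N:ℝ))^(-α) = ε^(-α) * (N:ℝ)^(-α) := Real.mul_rpow hε.le hN0.le
  have h2 : (ε*(N:ℝ))^(1-α) = ε^(1-α) * (N:ℝ)^(1-α) := Real.mul_rpow hε.le hN0.le
  have h3 : ((π:ℝ)/sR)^(-α) = (π:ℝ)^(-α) * sR^α := by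
    rw [Real.div_rpow hπ0.le hs0.le, Real.rpow_neg hs0.le, div_eq_mul_inv, inv_inv]
  have hπb : (π:ℝ)^(-α) ≤ 2^α * (N:ℝ)^((1/α+1/2)*(-α)) := by
    calc (π:ℝ)^(-α) ≤ ((N:ℝ)^(1/α+1/2)/2)^(-α) :=
          Real.rpow_le_rpow_of_nonpos (by positivity) hπx (by linarith)
      _ = 2^α * (N:ℝ)^((1/α+1/2)*(-α)) := by
          rw [Real.div_rpow hx0.le (by norm_num), Real.rpow_neg (by norm_num : (0:ℝ) ≤ 2),
            div_eq_mul_inv, inv_inv, Real.rpow_mul hN0.le]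
          ring
  calc (N:ℝ)^(1+α) * ((N:ℝ)^α * (sR * ((ε*(N:ℝ))^(-α) * (((π:ℝ)/sR)^(-α)
        * (2*(ε*(N:ℝ))^(1-α)*(3:ℝ)^k)))))
      = ((N:ℝ)^(1+α) * (N:ℝ)^α * (N:ℝ)^(-α) * (N:ℝ)^(1-α))
          * ((sR * sR^α) * ((ε^(-α)*ε^(1-α)) * ((2*(3:ℝ)^k)))) * (π:ℝ)^(-α) := by
        rw [h1, h2, h3]; ring
    _ ≤ ((N:ℝ)^(1+α) * (N:ℝ)^α * (N:ℝ)^(-α) * (N:ℝ)^(1-α))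
          * ((sR * sR^α) * ((ε^(-α)*ε^(1-α)) * ((2*(3:ℝ)^k))))
          * (2^α * (N:ℝ)^((1/α+1/2)*(-α))) := by
        apply mul_le_mul_of_nonneg_left hπb
        positivity
    _ = ((N:ℝ)^(1+α) * (N:ℝ)^α * (N:ℝ)^(-α) * (N:ℝ)^(1-α) * (N:ℝ)^((1/α+1/2)*(-α)))
          * ((sR * sR^α) * ((ε^(-α)*ε^(1-α)) * ((2*2^α)*(3:ℝ)^k))) := by ring
    _ = (N:ℝ)^(1-α/2) * (sR^(1+α) * (ε^(1-2*α) * (2^(1+α) * 3^k))) := by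
        have m1 : (N:ℝ)^(1+α) * (N:ℝ)^α * (N:ℝ)^(-α) * (N:ℝ)^(1-α)
            * (N:ℝ)^((1/α+1/2)*(-α)) = (N:ℝ)^(1-α/2) := by
          rw [← Real.rpow_add hN0, ← Real.rpow_add hN0, ← Real.rpow_add hN0,
            ← Real.rpow_add hN0]
          congr 1
          field_simp
          ring
        have m2 : sR * sR^α = sR^(1+α) := by
          nth_rewrite 1 [← Real.rpow_one sR]
          rw [← Real.rpow_add hs0]
        have m3 : ε^(-α)*ε^(1-α) = ε^(1-2*α) := by
          rw [← Real.rpow_add hε]; congr 1; ring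
        have m4 : (2:ℝ)*2^α = 2^(1+α) := by
          nth_rewrite 1 [← Real.rpow_one 2]
          rw [← Real.rpow_add (by norm_num : (0:ℝ) < 2)]
        rw [m1, m2, m3, m4]
    _ = (sR^(1+α) * (ε^(1-2*α) * (2^(1+α) * 3^k))) * (N:ℝ)^(1-α/2) := by ring

lemma algD1 {α : ℝ} (hα : 2 < α) {N : ℕ} (hN1 : (1:ℝ) ≤ (N:ℝ)) {ρ : ℝ} (hρ : 0 ≤ ρ)
    {sR : ℝ} (hs : 1 ≤ sR) (k kk : ℕ) (hkk : 1 + α ≤ (kk:ℝ)) :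
    (N:ℝ)^(1+α) * ((N:ℝ)^α * (sR^2 * (((N:ℝ)/2)^(-α) * (ρ^N * 3^k))))
      ≤ (sR^2 * (2^α * 3^k)) * ((N:ℝ)^kk * ρ^N) := by
  have hN0 : (0:ℝ) < (N:ℝ) := by linarith
  have hhalf : ((N:ℝ)/2)^(-α) = (N:ℝ)^(-α) * 2^α := by
    rw [Real.div_rpow hN0.le (by norm_num), Real.rpow_neg (by norm_num : (0:ℝ) ≤ 2),
      div_eq_mul_inv, inv_inv]
  have m1 : (N:ℝ)^(1+α) * (N:ℝ)^α * (N:ℝ)^(-α) = (N:ℝ)^(1+α) := by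
    rw [← Real.rpow_add hN0, ← Real.rpow_add hN0]
    congr 1
    ring
  have hNkk : (N:ℝ)^(1+α) ≤ (N:ℝ)^(kk:ℕ) := by
    rw [← Real.rpow_natCast (N:ℝ) kk]
    exact Real.rpow_le_rpow_of_exponent_le hN1 hkk
  calc (N:ℝ)^(1+α) * ((N:ℝ)^α * (sR^2 * (((N:ℝ)/2)^(-α) * (ρ^N * 3^k))))
      = ((N:ℝ)^(1+α) * (N:ℝ)^α * (N:ℝ)^(-α)) * (sR^2 * (2^α * 3^k)) * ρ^N := by
        rw [hhalf]; ring
    _ = (sR^2 * (2^α * 3^k)) * ((N:ℝ)^(1+α) * ρ^N) := by rw [m1]; ring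
    _ ≤ (sR^2 * (2^α * 3^k)) * ((N:ℝ)^kk * ρ^N) := by
        apply mul_le_mul_of_nonneg_left _ (by positivity)
        exact mul_le_mul_of_nonneg_right hNkk (pow_nonneg hρ N)

lemma algD2 {α ε : ℝ} (hα : 2 < α) (hε : 0 < ε) {N π : ℕ}
    (hN1 : (1:ℝ) ≤ (N:ℝ)) (hπx : ((N:ℝ)^(1/α+1/2))/2 ≤ (π:ℝ)) {sR : ℝ} (hs : 1 ≤ sR)
    (k : ℕ) :
    (N:ℝ)^(1+α) * ((N:ℝ)^α * (sR^3 * (((N:ℝ)/2)^(-α) * ((ε*(N:ℝ)/sR)^(-α)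
        * (2*((π:ℝ)/sR)^(1-α)*(3:ℝ)^k)))))
      ≤ (sR^3 * sR^α * sR^(α-1) * (ε^(-α) * (2^(2*α) * 3^k))) * (N:ℝ)^(1/2+1/α-α/2) := by
  have hN0 : (0:ℝ) < (N:ℝ) := by linarith
  have hs0 : (0:ℝ) < sR := by linarith
  have hαne : α ≠ 0 := by linarith
  have hx0 : (0:ℝ) < (N:ℝ)^(1/α+1/2) := Real.rpow_pos_of_pos hN0 _
  have hπ0 : (0:ℝ) < (π:ℝ) := by linarith
  have hhalf : ((N:ℝ)/2)^(-α) = (N:ℝ)^(-α) * 2^α := by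
    rw [Real.div_rpow hN0.le (by norm_num), Real.rpow_neg (by norm_num : (0:ℝ) ≤ 2),
      div_eq_mul_inv, inv_inv]
  have h1 : (ε*(N:ℝ)/sR)^(-α) = ε^(-α) * sR^α * (N:ℝ)^(-α) := by
    have e : ε*(N:ℝ)/sR = (ε/sR)*(N:ℝ) := by ring
    rw [e, Real.mul_rpow (by positivity) hN0.le, Real.div_rpow hε.le hs0.le,
      Real.rpow_neg hs0.le, div_eq_mul_inv, inv_inv]
  have h2 : ((π:ℝ)/sR)^(1-α) = (π:ℝ)^(1-α) * sR^(α-1) := by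
    rw [Real.div_rpow hπ0.le hs0.le]
    have e : sR^(1-α) = (sR^(α-1))⁻¹ := by
      rw [← Real.rpow_neg hs0.le]
      congr 1
      ring
    rw [e, div_eq_mul_inv, inv_inv]
  have hπb : (π:ℝ)^(1-α) ≤ 2^(α-1) * (N:ℝ)^((1/α+1/2)*(1-α)) := by
    calc (π:ℝ)^(1-α) ≤ ((N:ℝ)^(1/α+1/2)/2)^(1-α) :=
          Real.rpow_le_rpow_of_nonpos (by positivity) hπx (by linarith)
      _ = 2^(α-1) * (N:ℝ)^((1/α+1/2)*(1-α)) := by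
          rw [Real.div_rpow hx0.le (by norm_num), Real.rpow_mul hN0.le]
          have e : (2:ℝ)^(1-α) = ((2:ℝ)^(α-1))⁻¹ := by
            rw [← Real.rpow_neg (by norm_num : (0:ℝ) ≤ 2)]
            congr 1
            ring
          rw [e, div_eq_mul_inv, inv_inv]
          ring
  calc (N:ℝ)^(1+α) * ((N:ℝ)^α * (sR^3 * (((N:ℝ)/2)^(-α) * ((ε*(N:ℝ)/sR)^(-α)
        * (2*((π:ℝ)/sR)^(1-α)*(3:ℝ)^k)))))
      = ((N:ℝ)^(1+α) * (N:ℝ)^α * (N:ℝ)^(-α) * (N:ℝ)^(-α))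
          * (sR^3 * sR^α * sR^(α-1) * (ε^(-α) * (2^α * (2*(3:ℝ)^k)))) * (π:ℝ)^(1-α) := by
        rw [hhalf, h1, h2]; ring
    _ ≤ ((N:ℝ)^(1+α) * (N:ℝ)^α * (N:ℝ)^(-α) * (N:ℝ)^(-α))
          * (sR^3 * sR^α * sR^(α-1) * (ε^(-α) * (2^α * (2*(3:ℝ)^k))))
          * (2^(α-1) * (N:ℝ)^((1/α+1/2)*(1-α))) := by
        apply mul_le_mul_of_nonneg_left hπb
        positivity
    _ = ((N:ℝ)^(1+α) * (N:ℝ)^α * (N:ℝ)^(-α) * (N:ℝ)^(-α) * (N:ℝ)^((1/α+1/2)*(1-α)))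
          * (sR^3 * sR^α * sR^(α-1) * (ε^(-α) * ((2^α * 2^(α-1) * 2) * (3:ℝ)^k))) := by
        ring
    _ = (N:ℝ)^(1/2+1/α-α/2)
          * (sR^3 * sR^α * sR^(α-1) * (ε^(-α) * (2^(2*α) * 3^k))) := by
        have m1 : (N:ℝ)^(1+α) * (N:ℝ)^α * (N:ℝ)^(-α) * (N:ℝ)^(-α)
            * (N:ℝ)^((1/α+1/2)*(1-α)) = (N:ℝ)^(1/2+1/α-α/2) := by
          rw [← Real.rpow_add hN0, ← Real.rpow_add hN0, ← Real.rpow_add hN0,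
            ← Real.rpow_add hN0]
          congr 1
          field_simp
          ring
        have m4 : (2:ℝ)^α * 2^(α-1) * 2 = 2^(2*α) := by
          nth_rewrite 3 [← Real.rpow_one 2]
          rw [← Real.rpow_add (by norm_num : (0:ℝ) < 2),
            ← Real.rpow_add (by norm_num : (0:ℝ) < 2)]
          congr 1
          ring
        rw [m1, m4]
    _ = (sR^3 * sR^α * sR^(α-1) * (ε^(-α) * (2^(2*α) * 3^k))) * (N:ℝ)^(1/2+1/α-α/2) := by
        ring

set_option maxHeartbeats 2000000 in
theorem stmt_13 {S : Type*} [Fintype S] (α : ℝ) (hα : 2 < α)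
    (m : S → ℝ) (hm : ∀ x, 0 < m x)
    (Mstar : ℝ) (hMstar : IsGreatest (Set.range m) Mstar)
    (Sstar : Finset S) (hSstar : Sstar = Finset.univ.filter fun x => m x = Mstar)
    (hκ : 2 ≤ Sstar.card)
    (mstar : S → ℝ) (hmstar : ∀ x, mstar x = m x / Mstar)
    (Z : ℕ → ℝ)
    (hZ : ∀ N, Z N = (N : ℝ) ^ α *
      ∑ η ∈ configs S N, (∏ x, mstar x ^ η x) / ∏ x, aZR α (η x))
    (μ : ℕ → (S → ℕ) → ℝ)
    (hμ : ∀ N η, μ N η =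
      (N : ℝ) ^ α * (∏ x, mstar x ^ η x) / (Z N * ∏ x, aZR α (η x)))
    (ε : ℝ) (hε : 0 < ε) (hε' : ε < 1 / 8) :
    Tendsto (fun N : ℕ => (N : ℝ) ^ (1 + α) * ∑ η ∈ bdInG S α ε Sstar N, μ N η)
      atTop (nhds 0) ∧
    Tendsto (fun N : ℕ => (N : ℝ) ^ (1 + α) * ∑ η ∈ bdOutG S α ε Sstar N, μ N η)
      atTop (nhds 0) := by
  classical
  -- basic setup
  set s := Fintype.card S with hsdef
  have hsstar_le : Sstar.card ≤ s := by
    rw [hsdef, ← card_univ]; exact card_le_card (subset_univ _)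
  have hs2 : 2 ≤ s := le_trans hκ hsstar_le
  have hs1 : 1 ≤ s := by omega
  have hsR1 : (1:ℝ) ≤ (s:ℝ) := by exact_mod_cast hs1
  have hs0 : (0:ℝ) < (s:ℝ) := by linarith
  obtain ⟨x₀, hx₀S⟩ := Finset.card_pos.mp (by omega : 0 < Sstar.card)
  haveI hSne : Nonempty S := ⟨x₀⟩
  have hα0 : (0:ℝ) < α := by linarith
  have hα0' : (0:ℝ) ≤ α := by linarith
  -- mstar facts
  obtain ⟨xM, hxM⟩ := hMstar.1
  have hM0 : 0 < Mstar := hxM ▸ hm xM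
  have hms0 : ∀ z, 0 < mstar z := fun z => by
    rw [hmstar]; exact div_pos (hm z) hM0
  have hmsle : ∀ z, mstar z ≤ 1 := fun z => by
    rw [hmstar, div_le_one hM0]; exact hMstar.2 ⟨z, rfl⟩
  have hmsStar : ∀ x ∈ Sstar, mstar x = 1 := by
    intro x hx
    rw [hSstar] at hx
    rw [hmstar, (mem_filter.mp hx).2]
    exact div_self hM0.ne'
  have hmslt : ∀ z, z ∉ Sstar → mstar z < 1 := by
    intro z hz
    rw [hmstar, div_lt_one hM0]
    refine lt_of_le_of_ne (hMstar.2 ⟨z, rfl⟩) ?_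
    intro h
    exact hz (by rw [hSstar]; exact mem_filter.mpr ⟨mem_univ z, h⟩)
  -- δ and ρ
  set δ : ℝ := univ.sup' Finset.univ_nonempty
    (fun z => if mstar z < 1 then mstar z else (1:ℝ)/2) with hδdef
  have hδlt1 : δ < 1 := by
    rw [hδdef]
    rw [Finset.sup'_lt_iff]
    intro z _
    split
    · assumption
    · norm_num
  have hδpos : 0 < δ := by
    have h1 : (if mstar x₀ < 1 then mstar x₀ else (1:ℝ)/2) ≤ δ := by
      rw [hδdef]
      exact Finset.le_sup' (fun z => if mstar z < 1 then mstar z else (1:ℝ)/2) (mem_univ x₀)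
    have h2 : (0:ℝ) < (if mstar x₀ < 1 then mstar x₀ else (1:ℝ)/2) := by
      split
      · exact hms0 x₀
      · norm_num
    linarith
  have hδle : ∀ z, z ∉ Sstar → mstar z ≤ δ := by
    intro z hz
    have h := hmslt z hz
    calc mstar z = (if mstar z < 1 then mstar z else (1:ℝ)/2) := (if_pos h).symm
      _ ≤ δ := by
        rw [hδdef]
        exact Finset.le_sup' (fun z => if mstar z < 1 then mstar z else (1:ℝ)/2) (mem_univ z)
  set ρ : ℝ := δ ^ (ε/(s:ℝ)) with hρdef
  have hρ0 : 0 ≤ ρ := Real.rpow_nonneg hδpos.le _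
  have hρ1 : ρ < 1 := Real.rpow_lt_one hδpos.le hδlt1 (by positivity)
  set kk : ℕ := ⌈α⌉₊ + 2 with hkkdef
  have hkk : 1 + α ≤ (kk:ℝ) := by
    have := Nat.le_ceil α
    rw [hkkdef]
    push_cast
    linarith
  -- Z and μ facts
  have hZpos : ∀ N : ℕ, 0 ≤ Z N := by
    intro N
    rw [hZ]
    apply mul_nonneg (Real.rpow_nonneg (Nat.cast_nonneg N) α)
    apply sum_nonneg
    intro η _
    apply div_nonneg
    · exact prod_nonneg (fun z _ => pow_nonneg (hms0 z).le _)
    · exact prod_nonneg (fun z _ => (aZR_pos' α (η z)).le)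
  have hZ1 : ∀ N : ℕ, 1 ≤ N → 1 ≤ Z N := by
    intro N hN
    set η₀ : S → ℕ := fun z => if z = x₀ then N else 0 with hη₀def
    have hη₀mem : η₀ ∈ configs S N := by
      rw [mem_configs_iff]
      constructor
      · intro z
        rw [hη₀def]
        dsimp only
        split <;> omega
      · rw [hη₀def]
        simp only
        rw [Finset.sum_ite_eq' univ x₀ (fun _ => N)]
        rw [if_pos (mem_univ x₀)]
    have hterm : (∏ z, mstar z ^ η₀ z) / (∏ z, aZR α (η₀ z)) = ((N:ℝ)^α)⁻¹ := by
      have h1 : ∏ z, mstar z ^ η₀ z = 1 := by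
        apply prod_eq_one
        intro z _
        rw [hη₀def]
        dsimp only
        split
        · rename_i h; subst h; rw [hmsStar z hx₀S, one_pow]
        · rw [pow_zero]
      have h2 : ∏ z, aZR α (η₀ z) = (N:ℝ)^α := by
        rw [Finset.prod_eq_single x₀]
        · rw [hη₀def]; dsimp only; rw [if_pos rfl]
          unfold aZR
          rw [if_neg (by omega)]
        · intro z _ hz
          rw [hη₀def]; dsimp only; rw [if_neg hz]
          unfold aZR
          rw [if_pos rfl]
        · intro h
          exact absurd (mem_univ x₀) h
      rw [h1, h2, one_div]
    have hNα : (0:ℝ) < (N:ℝ)^α := by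
      apply Real.rpow_pos_of_pos
      exact_mod_cast Nat.lt_of_lt_of_le Nat.zero_lt_one hN
    have hsum0 : ((N:ℝ)^α)⁻¹
        ≤ ∑ η ∈ configs S N, (∏ z, mstar z ^ η z) / ∏ z, aZR α (η z) := by
      rw [← hterm]
      refine Finset.single_le_sum
        (f := fun η : S → ℕ => (∏ z, mstar z ^ η z) / ∏ z, aZR α (η z)) ?_ hη₀mem
      intro η _
      apply div_nonneg
      · exact prod_nonneg (fun z _ => pow_nonneg (hms0 z).le _)
      · exact prod_nonneg (fun z _ => (aZR_pos' α (η z)).le)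
    calc (1:ℝ) = (N:ℝ)^α * ((N:ℝ)^α)⁻¹ := (mul_inv_cancel₀ hNα.ne').symm
      _ ≤ (N:ℝ)^α * ∑ η ∈ configs S N, (∏ z, mstar z ^ η z) / ∏ z, aZR α (η z) :=
          mul_le_mul_of_nonneg_left hsum0 hNα.le
      _ = Z N := (hZ N).symm
  have hμnn : ∀ N η, 0 ≤ μ N η := by
    intro N η
    rw [hμ]
    apply div_nonneg
    · exact mul_nonneg (Real.rpow_nonneg (Nat.cast_nonneg N) α)
        (prod_nonneg (fun z _ => pow_nonneg (hms0 z).le _))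
    · exact mul_nonneg (hZpos N) (prod_nonneg (fun z _ => (aZR_pos' α (η z)).le))
  have hμle : ∀ N : ℕ, 1 ≤ N → ∀ η, μ N η ≤ (N:ℝ)^α * ∏ z, FF α mstar z (η z) := by
    intro N hN η
    rw [hμ]
    have hFFprod : ∏ z, FF α mstar z (η z)
        = (∏ z, mstar z ^ η z) / ∏ z, aZR α (η z) := by
      unfold FF
      rw [Finset.prod_div_distrib]
    have haprod : (0:ℝ) < ∏ z, aZR α (η z) :=
      prod_pos (fun z _ => aZR_pos' α (η z))
    have hnum : (0:ℝ) ≤ (N:ℝ)^α * ∏ z, mstar z ^ η z :=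
      mul_nonneg (Real.rpow_nonneg (Nat.cast_nonneg N) α)
        (prod_nonneg (fun z _ => pow_nonneg (hms0 z).le _))
    calc (N:ℝ)^α * (∏ z, mstar z ^ η z) / (Z N * ∏ z, aZR α (η z))
        = ((N:ℝ)^α * (∏ z, mstar z ^ η z) / ∏ z, aZR α (η z)) / Z N := by
          rw [mul_comm (Z N) _, ← div_div]
      _ ≤ (N:ℝ)^α * (∏ z, mstar z ^ η z) / ∏ z, aZR α (η z) :=
          div_le_self (div_nonneg hnum haprod.le) (hZ1 N hN)
      _ = (N:ℝ)^α * ∏ z, FF α mstar z (η z) := by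
          rw [hFFprod, mul_div_assoc]
  -- constants and bound function
  set CJc : ℝ := (s:ℝ)^(1+α) * (ε^(1-2*α) * (2^(1+α) * 3^s)) with hCJcdef
  set D2C : ℝ := ((s:ℝ)^3 * (s:ℝ)^α * (s:ℝ)^(α-1) * (ε^(-α) * (2^(2*α) * 3^s))) with hD2Cdef
  set D1C : ℝ := ((s:ℝ)^2 * (2^α * 3^s)) with hD1Cdef
  set Bound : ℕ → ℝ := fun N => (s:ℝ)^2 * (CJc * (N:ℝ)^(1-α/2))
      + (D2C * (N:ℝ)^(1/2+1/α-α/2) + D1C * ((N:ℝ)^kk * ρ^N)) with hBounddef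
  -- Bound tends to zero
  have hBtend : Tendsto Bound atTop (nhds 0) := by
    have ht1 : Tendsto (fun N : ℕ => (N:ℝ)^(1-α/2)) atTop (nhds 0) := by
      have he : (fun N : ℕ => (N:ℝ)^(1-α/2))
          = (fun x : ℝ => x ^ (-(α/2-1))) ∘ (Nat.cast : ℕ → ℝ) := by
        funext N
        simp only [Function.comp_apply]
        congr 1
        ring
      rw [he]
      exact (tendsto_rpow_neg_atTop (by linarith)).comp tendsto_natCast_atTop_atTop
    have ht2 : Tendsto (fun N : ℕ => (N:ℝ)^(1/2+1/α-α/2)) atTop (nhds 0) := by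
      have hpos : 0 < α/2 - 1/α - 1/2 := by
        have h1 : 0 < 1/α := by positivity
        have h2 : 1/α < 1/2 := by
          rw [div_lt_div_iff₀ hα0 (by norm_num)]
          linarith
        nlinarith
      have he : (fun N : ℕ => (N:ℝ)^(1/2+1/α-α/2))
          = (fun x : ℝ => x ^ (-(α/2-1/α-1/2))) ∘ (Nat.cast : ℕ → ℝ) := by
        funext N
        simp only [Function.comp_apply]
        congr 1
        ring
      rw [he]
      exact (tendsto_rpow_neg_atTop hpos).comp tendsto_natCast_atTop_atTop
    have ht3 : Tendsto (fun N : ℕ => (N:ℝ)^kk * ρ^N) atTop (nhds 0) := by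
      apply tendsto_pow_const_mul_const_pow_of_abs_lt_one
      rw [abs_of_nonneg hρ0]
      exact hρ1
    have := ((ht1.const_mul ((s:ℝ)^2 * CJc)).add
      ((ht2.const_mul D2C).add (ht3.const_mul D1C)))
    rw [hBounddef]
    simpa using this.congr (fun N => by ring)
  -- eventual largeness
  have hx_tend : Tendsto (fun N : ℕ => (N:ℝ)^(1/α+1/2)) atTop atTop := by
    have hpos : (0:ℝ) < 1/α + 1/2 := by positivity
    exact (tendsto_rpow_atTop hpos).comp tendsto_natCast_atTop_atTop
  have hev1 : ∀ᶠ N : ℕ in atTop, s ≤ piZR α N := by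
    filter_upwards [hx_tend.eventually_ge_atTop ((s:ℝ))] with N hN
    exact Nat.le_floor hN
  have hev2 : ∀ᶠ N : ℕ in atTop, ((piZR α N : ℝ)) + 1 ≤ ε * N := by
    have htend0 : Tendsto (fun N : ℕ => (N:ℝ)^(1/α+1/2-1)) atTop (nhds 0) := by
      have h2 : 1/α < 1/2 := by
        rw [div_lt_div_iff₀ hα0 (by norm_num)]
        linarith
      have he : (fun N : ℕ => (N:ℝ)^(1/α+1/2-1))
          = (fun x : ℝ => x ^ (-(1-(1/α+1/2)))) ∘ (Nat.cast : ℕ → ℝ) := by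
        funext N
        simp only [Function.comp_apply]
        congr 1
        ring
      rw [he]
      exact (tendsto_rpow_neg_atTop (by linarith)).comp tendsto_natCast_atTop_atTop
    have h1 := htend0.eventually_lt_const (by positivity : (0:ℝ) < ε/2)
    have h2 : ∀ᶠ N : ℕ in atTop, (1:ℝ) ≤ (ε/2) * N := by
      have : Tendsto (fun N : ℕ => (ε/2) * (N:ℝ)) atTop atTop :=
        tendsto_natCast_atTop_atTop.const_mul_atTop (by positivity)
      exact this.eventually_ge_atTop 1
    filter_upwards [h1, h2, eventually_gt_atTop 0] with N hN1 hN2 hN0'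
    have hN0R : (0:ℝ) < (N:ℝ) := by exact_mod_cast hN0'
    have hfl : ((piZR α N : ℕ):ℝ) ≤ (N:ℝ)^(1/α+1/2) := by
      unfold piZR
      exact Nat.floor_le (by positivity)
    have hxb : (N:ℝ)^(1/α+1/2) ≤ (ε/2) * N := by
      calc (N:ℝ)^(1/α+1/2) = (N:ℝ)^(1/α+1/2-1) * (N:ℝ)^(1:ℝ) := by
            rw [← Real.rpow_add hN0R]
            congr 1
            ring
        _ = (N:ℝ)^(1/α+1/2-1) * (N:ℝ) := by rw [Real.rpow_one]
        _ ≤ (ε/2) * (N:ℝ) := mul_le_mul_of_nonneg_right hN1.le hN0R.le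
    linarith
  have hev3 : ∀ᶠ N : ℕ in atTop, (2:ℝ) ≤ (N:ℝ)^(1/α+1/2) :=
    hx_tend.eventually_ge_atTop 2
  -- core bound
  have hkey : ∀ c : ℕ, c ≤ 1 → ∀ N : ℕ, 1 ≤ N → 4 ≤ N → s ≤ piZR α N →
      ((piZR α N:ℝ) + 1 ≤ ε*N) → ((2:ℝ) ≤ (N:ℝ)^(1/α+1/2)) →
      ∀ (PD : S → Finset (S→ℕ)) (PJ : S → S → Finset (S→ℕ)),
      (∀ x ∈ Sstar, PD x ⊆ configs S N) →
      (∀ x ∈ Sstar, ∀ η ∈ PD x, η x + c = ⌈(N:ℝ)*(1-2*ε)⌉₊) →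
      (∀ x ∈ Sstar, ∀ η ∈ PD x, ∀ y ∈ Sstar.erase x, ¬(N ≤ η x + η y + piZR α N)) →
      (∀ x ∈ Sstar, ∀ y ∈ Sstar.erase x, PJ x y ⊆ configs S N) →
      (∀ x ∈ Sstar, ∀ y ∈ Sstar.erase x, ∀ η ∈ PJ x y, η x + η y + piZR α N + c = N) →
      (∀ x ∈ Sstar, ∀ y ∈ Sstar.erase x, ∀ η ∈ PJ x y,
        ((η x:ℝ)) < N*(1-2*ε) ∧ ((η y:ℝ)) < N*(1-2*ε)) →
      (N:ℝ)^(1+α) * ((∑ x ∈ Sstar, ∑ η ∈ PD x, μ N η)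
          + ∑ x ∈ Sstar, ∑ y ∈ Sstar.erase x, ∑ η ∈ PJ x y, μ N η) ≤ Bound N := by
    intro c hc N hN1 hN4 hπs hπε hx2 PD PJ hD1 hD2 hD3 hJ1 hJ2 hJ3
    have hN1R : (1:ℝ) ≤ (N:ℝ) := by exact_mod_cast hN1
    have hN0R : (0:ℝ) < (N:ℝ) := by linarith
    set π := piZR α N with hπdef
    set B1 : ℝ := ((N:ℝ)/2) ^ (-α) * (ρ ^ N * 3 ^ s) with hB1def
    set B2 : ℝ := ((N:ℝ)/2) ^ (-α) * ((ε*(N:ℝ)/(s:ℝ)) ^ (-α)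
        * (2 * (((π:ℝ))/(s:ℝ)) ^ (1-α) * 3 ^ s)) with hB2def
    set BJ : ℝ := (ε*(N:ℝ)) ^ (-α) * (((π:ℝ)/(s:ℝ)) ^ (-α)
        * (2 * (ε*(N:ℝ)) ^ (1-α) * 3 ^ s)) with hBJdef
    have hB10 : 0 ≤ B1 := by rw [hB1def]; positivity
    have hB20 : 0 ≤ B2 := by rw [hB2def]; positivity
    have hBJ0 : 0 ≤ BJ := by rw [hBJdef]; positivity
    -- D part
    have hDb : ∀ x ∈ Sstar, ∑ η ∈ PD x, μ N η
        ≤ (N:ℝ)^α * ((s:ℝ) * B1 + ((s:ℝ))^2 * B2) := by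
      intro x hx
      have hD := Dpiece hα hε hε' hms0 hmsle Sstar hδle hδpos hδlt1 N c hc x
        (PD x) (hD1 x hx) (hD2 x hx) (hD3 x hx) hπs hπε hN4
      calc ∑ η ∈ PD x, μ N η
          ≤ ∑ η ∈ PD x, (N:ℝ)^α * ∏ z, FF α mstar z (η z) :=
            sum_le_sum (fun η _ => hμle N hN1 η)
        _ = (N:ℝ)^α * ∑ η ∈ PD x, ∏ z, FF α mstar z (η z) := by rw [Finset.mul_sum]
        _ ≤ (N:ℝ)^α * ((s:ℝ) * B1 + ((s:ℝ))^2 * B2) := by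
            apply mul_le_mul_of_nonneg_left _ (Real.rpow_nonneg hN0R.le α)
            rw [hB1def, hB2def]
            exact hD
    -- J part
    have hJb : ∀ x ∈ Sstar, ∀ y ∈ Sstar.erase x, ∑ η ∈ PJ x y, μ N η
        ≤ (N:ℝ)^α * ((s:ℝ) * BJ) := by
      intro x hx y hy
      have hxy : x ≠ y := fun h => (mem_erase.mp hy).1 h.symm
      have hJ := Jpiece hα hε hms0 hmsle N c hc x y hxy (PJ x y) (hJ1 x hx y hy)
        (hJ2 x hx y hy) (fun η hη => (hJ3 x hx y hy η hη).1)
        (fun η hη => (hJ3 x hx y hy η hη).2) hπs hπε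
      calc ∑ η ∈ PJ x y, μ N η
          ≤ ∑ η ∈ PJ x y, (N:ℝ)^α * ∏ z, FF α mstar z (η z) :=
            sum_le_sum (fun η _ => hμle N hN1 η)
        _ = (N:ℝ)^α * ∑ η ∈ PJ x y, ∏ z, FF α mstar z (η z) := by rw [Finset.mul_sum]
        _ ≤ (N:ℝ)^α * ((s:ℝ) * BJ) := by
            apply mul_le_mul_of_nonneg_left _ (Real.rpow_nonneg hN0R.le α)
            rw [hBJdef]
            exact hJ
    -- sum over x, y
    have hDsum : ∑ x ∈ Sstar, ∑ η ∈ PD x, μ N η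
        ≤ (s:ℝ) * ((N:ℝ)^α * ((s:ℝ) * B1 + ((s:ℝ))^2 * B2)) := by
      calc ∑ x ∈ Sstar, ∑ η ∈ PD x, μ N η
          ≤ Sstar.card • ((N:ℝ)^α * ((s:ℝ) * B1 + ((s:ℝ))^2 * B2)) :=
            Finset.sum_le_card_nsmul _ _ _ hDb
        _ ≤ (s:ℝ) * ((N:ℝ)^α * ((s:ℝ) * B1 + ((s:ℝ))^2 * B2)) := by
            rw [nsmul_eq_mul]
            apply mul_le_mul_of_nonneg_right _ (by positivity)
            exact_mod_cast hsstar_le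
    have hJsum : ∑ x ∈ Sstar, ∑ y ∈ Sstar.erase x, ∑ η ∈ PJ x y, μ N η
        ≤ (s:ℝ) * ((s:ℝ) * ((N:ℝ)^α * ((s:ℝ) * BJ))) := by
      have hinner : ∀ x ∈ Sstar, ∑ y ∈ Sstar.erase x, ∑ η ∈ PJ x y, μ N η
          ≤ (s:ℝ) * ((N:ℝ)^α * ((s:ℝ) * BJ)) := by
        intro x hx
        calc ∑ y ∈ Sstar.erase x, ∑ η ∈ PJ x y, μ N η
            ≤ (Sstar.erase x).card • ((N:ℝ)^α * ((s:ℝ) * BJ)) :=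
              Finset.sum_le_card_nsmul _ _ _ (hJb x hx)
          _ ≤ (s:ℝ) * ((N:ℝ)^α * ((s:ℝ) * BJ)) := by
              rw [nsmul_eq_mul]
              apply mul_le_mul_of_nonneg_right _ (by positivity)
              have h1 : (Sstar.erase x).card ≤ s :=
                le_trans (card_le_card (erase_subset x Sstar)) hsstar_le
              exact_mod_cast h1
      calc ∑ x ∈ Sstar, ∑ y ∈ Sstar.erase x, ∑ η ∈ PJ x y, μ N η
          ≤ Sstar.card • ((s:ℝ) * ((N:ℝ)^α * ((s:ℝ) * BJ))) :=
            Finset.sum_le_card_nsmul _ _ _ hinner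
        _ ≤ (s:ℝ) * ((s:ℝ) * ((N:ℝ)^α * ((s:ℝ) * BJ))) := by
            rw [nsmul_eq_mul]
            apply mul_le_mul_of_nonneg_right _ (by positivity)
            exact_mod_cast hsstar_le
    -- assemble and algebra
    have hπx : ((N:ℝ)^(1/α+1/2))/2 ≤ ((π:ℕ):ℝ) := by
      rw [hπdef]
      unfold piZR
      exact floor_half hx2
    have hT3 : (N:ℝ)^(1+α) * ((N:ℝ)^α * ((s:ℝ) * BJ)) ≤ CJc * (N:ℝ)^(1-α/2) := by
      rw [hBJdef, hCJcdef]
      exact algJ hα hε hN1R hπx hsR1 s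
    have hT2 : (N:ℝ)^(1+α) * ((N:ℝ)^α * (((s:ℝ))^3 * (((N:ℝ)/2) ^ (-α)
        * ((ε*(N:ℝ)/(s:ℝ)) ^ (-α) * (2 * (((π:ℝ))/(s:ℝ)) ^ (1-α) * (3:ℝ) ^ s)))))
        ≤ D2C * (N:ℝ)^(1/2+1/α-α/2) := by
      rw [hD2Cdef]
      exact algD2 hα hε hN1R hπx hsR1 s
    have hT1 : (N:ℝ)^(1+α) * ((N:ℝ)^α * (((s:ℝ))^2 * B1))
        ≤ D1C * ((N:ℝ)^kk * ρ^N) := by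
      rw [hB1def, hD1Cdef]
      exact algD1 hα hN1R hρ0 hsR1 s kk hkk
    have hstep : (N:ℝ)^(1+α) * ((∑ x ∈ Sstar, ∑ η ∈ PD x, μ N η)
          + ∑ x ∈ Sstar, ∑ y ∈ Sstar.erase x, ∑ η ∈ PJ x y, μ N η)
        ≤ (N:ℝ)^(1+α) * ((s:ℝ) * ((N:ℝ)^α * ((s:ℝ) * B1 + ((s:ℝ))^2 * B2))
            + (s:ℝ) * ((s:ℝ) * ((N:ℝ)^α * ((s:ℝ) * BJ)))) := by
      apply mul_le_mul_of_nonneg_left _ (Real.rpow_nonneg hN0R.le _)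
      exact add_le_add hDsum hJsum
    have hre : (N:ℝ)^(1+α) * ((s:ℝ) * ((N:ℝ)^α * ((s:ℝ) * B1 + ((s:ℝ))^2 * B2))
            + (s:ℝ) * ((s:ℝ) * ((N:ℝ)^α * ((s:ℝ) * BJ))))
        = (s:ℝ)^2 * ((N:ℝ)^(1+α) * ((N:ℝ)^α * ((s:ℝ) * BJ)))
          + ((N:ℝ)^(1+α) * ((N:ℝ)^α * (((s:ℝ))^3 * (((N:ℝ)/2) ^ (-α)
              * ((ε*(N:ℝ)/(s:ℝ)) ^ (-α) * (2 * (((π:ℝ))/(s:ℝ)) ^ (1-α) * (3:ℝ) ^ s)))))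
            + (N:ℝ)^(1+α) * ((N:ℝ)^α * (((s:ℝ))^2 * B1))) := by
      rw [hB2def]
      ring
    calc (N:ℝ)^(1+α) * ((∑ x ∈ Sstar, ∑ η ∈ PD x, μ N η)
          + ∑ x ∈ Sstar, ∑ y ∈ Sstar.erase x, ∑ η ∈ PJ x y, μ N η)
        ≤ (N:ℝ)^(1+α) * ((s:ℝ) * ((N:ℝ)^α * ((s:ℝ) * B1 + ((s:ℝ))^2 * B2))
            + (s:ℝ) * ((s:ℝ) * ((N:ℝ)^α * ((s:ℝ) * BJ)))) := hstep
      _ = (s:ℝ)^2 * ((N:ℝ)^(1+α) * ((N:ℝ)^α * ((s:ℝ) * BJ)))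
          + ((N:ℝ)^(1+α) * ((N:ℝ)^α * (((s:ℝ))^3 * (((N:ℝ)/2) ^ (-α)
              * ((ε*(N:ℝ)/(s:ℝ)) ^ (-α) * (2 * (((π:ℝ))/(s:ℝ)) ^ (1-α) * (3:ℝ) ^ s)))))
            + (N:ℝ)^(1+α) * ((N:ℝ)^α * (((s:ℝ))^2 * B1))) := hre
      _ ≤ (s:ℝ)^2 * (CJc * (N:ℝ)^(1-α/2))
          + (D2C * (N:ℝ)^(1/2+1/α-α/2) + D1C * ((N:ℝ)^kk * ρ^N)) := by
          apply add_le_add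
          · exact mul_le_mul_of_nonneg_left hT3 (by positivity)
          · exact add_le_add hT2 hT1
      _ = Bound N := by rw [hBounddef]
  -- union bounds and conclusion
  have hubIn : ∀ N : ℕ, ∑ η ∈ bdInG S α ε Sstar N, μ N η
      ≤ (∑ x ∈ Sstar, ∑ η ∈ bdInD S α ε Sstar N x, μ N η)
        + ∑ x ∈ Sstar, ∑ y ∈ Sstar.erase x, ∑ η ∈ bdInJ S α ε N x y, μ N η := by
    intro N
    unfold bdInG
    calc ∑ η ∈ (Sstar.biUnion (fun x => bdInD S α ε Sstar N x)
          ∪ Sstar.biUnion (fun x => (Sstar.erase x).biUnion fun y => bdInJ S α ε N x y)),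
            μ N η
        ≤ (∑ η ∈ Sstar.biUnion (fun x => bdInD S α ε Sstar N x), μ N η)
          + ∑ η ∈ Sstar.biUnion (fun x => (Sstar.erase x).biUnion
              fun y => bdInJ S α ε N x y), μ N η :=
          sum_union_le_real _ _ _ (hμnn N)
      _ ≤ _ := by
          apply add_le_add
          · exact sum_biUnion_le_real _ _ _ (hμnn N)
          · calc ∑ η ∈ Sstar.biUnion (fun x => (Sstar.erase x).biUnion
                  fun y => bdInJ S α ε N x y), μ N η
                ≤ ∑ x ∈ Sstar, ∑ η ∈ (Sstar.erase x).biUnion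
                    (fun y => bdInJ S α ε N x y), μ N η :=
                  sum_biUnion_le_real _ _ _ (hμnn N)
              _ ≤ _ := sum_le_sum (fun x _ => sum_biUnion_le_real _ _ _ (hμnn N))
  have hubOut : ∀ N : ℕ, ∑ η ∈ bdOutG S α ε Sstar N, μ N η
      ≤ (∑ x ∈ Sstar, ∑ η ∈ bdOutD S α ε Sstar N x, μ N η)
        + ∑ x ∈ Sstar, ∑ y ∈ Sstar.erase x, ∑ η ∈ bdOutJ S α ε Sstar N x y, μ N η := by
    intro N
    unfold bdOutG
    calc ∑ η ∈ (Sstar.biUnion (fun x => bdOutD S α ε Sstar N x)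
          ∪ Sstar.biUnion (fun x => (Sstar.erase x).biUnion
            fun y => bdOutJ S α ε Sstar N x y)), μ N η
        ≤ (∑ η ∈ Sstar.biUnion (fun x => bdOutD S α ε Sstar N x), μ N η)
          + ∑ η ∈ Sstar.biUnion (fun x => (Sstar.erase x).biUnion
              fun y => bdOutJ S α ε Sstar N x y), μ N η :=
          sum_union_le_real _ _ _ (hμnn N)
      _ ≤ _ := by
          apply add_le_add
          · exact sum_biUnion_le_real _ _ _ (hμnn N)
          · calc ∑ η ∈ Sstar.biUnion (fun x => (Sstar.erase x).biUnion
                  fun y => bdOutJ S α ε Sstar N x y), μ N η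
                ≤ ∑ x ∈ Sstar, ∑ η ∈ (Sstar.erase x).biUnion
                    (fun y => bdOutJ S α ε Sstar N x y), μ N η :=
                  sum_biUnion_le_real _ _ _ (hμnn N)
              _ ≤ _ := sum_le_sum (fun x _ => sum_biUnion_le_real _ _ _ (hμnn N))
  -- extraction for inner boundaries
  have hInD1 : ∀ N : ℕ, ∀ x ∈ Sstar, bdInD S α ε Sstar N x ⊆ configs S N := by
    intro N x _ η hη
    have h1 := (mem_sdiff.mp hη).1
    exact filter_subset _ _ ((filter_subset _ _) h1)
  have hInD2 : ∀ N : ℕ, ∀ x ∈ Sstar, ∀ η ∈ bdInD S α ε Sstar N x,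
      η x + 0 = ⌈(N:ℝ)*(1-2*ε)⌉₊ := by
    intro N x _ η hη
    have h1 := (mem_filter.mp (mem_sdiff.mp hη).1).2
    omega
  have hInD3 : ∀ N : ℕ, ∀ x ∈ Sstar, ∀ η ∈ bdInD S α ε Sstar N x,
      ∀ y ∈ Sstar.erase x, ¬(N ≤ η x + η y + piZR α N) := by
    intro N x hx η hη y hy hle
    apply (mem_sdiff.mp hη).2
    apply mem_biUnion.mpr
    refine ⟨y, hy, ?_⟩
    unfold Ttube
    exact mem_filter.mpr ⟨hInD1 N x hx hη, hle⟩
  have hInJ1 : ∀ N : ℕ, ∀ x ∈ Sstar, ∀ y ∈ Sstar.erase x,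
      bdInJ S α ε N x y ⊆ configs S N := by
    intro N x _ y _ η hη
    have h1 : η ∈ Jtube S α ε N x y := (mem_filter.mp hη).1
    have h2 : η ∈ Ttube S α N x y := (mem_sdiff.mp h1).1
    exact filter_subset _ _ h2
  have hInJ2 : ∀ N : ℕ, ∀ x ∈ Sstar, ∀ y ∈ Sstar.erase x, ∀ η ∈ bdInJ S α ε N x y,
      η x + η y + piZR α N + 0 = N := by
    intro N x _ y _ η hη
    have := (mem_filter.mp hη).2
    omega
  have hInJ3 : ∀ N : ℕ, ∀ x ∈ Sstar, ∀ y ∈ Sstar.erase x, ∀ η ∈ bdInJ S α ε N x y,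
      ((η x:ℝ)) < N*(1-2*ε) ∧ ((η y:ℝ)) < N*(1-2*ε) := by
    intro N x hx y hy η hη
    have h1 : η ∈ Jtube S α ε N x y := (mem_filter.mp hη).1
    have h2 := (mem_sdiff.mp h1).2
    have hconf : η ∈ configs S N := hInJ1 N x hx y hy hη
    rw [mem_union] at h2
    push_neg at h2
    constructor
    · by_contra hcon
      push_neg at hcon
      exact h2.1 (mem_filter.mpr ⟨hconf, hcon⟩)
    · by_contra hcon
      push_neg at hcon
      exact h2.2 (mem_filter.mpr ⟨hconf, hcon⟩)
  -- extraction for outer boundaries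
  have hOutD1 : ∀ N : ℕ, ∀ x ∈ Sstar, bdOutD S α ε Sstar N x ⊆ configs S N := by
    intro N x _ η hη
    have h1 := (mem_sdiff.mp hη).1
    have h2 := (mem_filter.mp h1).1
    exact (mem_sdiff.mp h2).1
  have hOutD2 : ∀ N : ℕ, ∀ x ∈ Sstar, ∀ η ∈ bdOutD S α ε Sstar N x,
      η x + 1 = ⌈(N:ℝ)*(1-2*ε)⌉₊ := by
    intro N x _ η hη
    exact (mem_filter.mp (mem_sdiff.mp hη).1 :).2
  have hOutD3 : ∀ N : ℕ, ∀ x ∈ Sstar, ∀ η ∈ bdOutD S α ε Sstar N x,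
      ∀ y ∈ Sstar.erase x, ¬(N ≤ η x + η y + piZR α N) := by
    intro N x hx η hη y hy hle
    apply (mem_sdiff.mp hη).2
    apply mem_biUnion.mpr
    refine ⟨y, hy, ?_⟩
    unfold Ttube
    exact mem_filter.mpr ⟨hOutD1 N x hx hη, hle⟩
  have hOutJ1 : ∀ N : ℕ, ∀ x ∈ Sstar, ∀ y ∈ Sstar.erase x,
      bdOutJ S α ε Sstar N x y ⊆ configs S N := by
    intro N x _ y _ η hη
    have h1 := (mem_filter.mp hη).1
    exact (mem_sdiff.mp h1).1
  have hOutJ2 : ∀ N : ℕ, ∀ x ∈ Sstar, ∀ y ∈ Sstar.erase x,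
      ∀ η ∈ bdOutJ S α ε Sstar N x y, η x + η y + piZR α N + 1 = N := by
    intro N x _ y _ η hη
    exact (mem_filter.mp hη).2
  have hnotD : ∀ N : ℕ, ∀ x ∈ Sstar, ∀ η : S → ℕ, η ∈ configs S N →
      η ∉ Gset S α ε Sstar N → ((η x:ℝ)) < N*(1-2*ε) := by
    intro N x hx η hconf hG
    by_contra hcon
    push_neg at hcon
    apply hG
    unfold Gset
    apply mem_union_left
    apply mem_biUnion.mpr
    refine ⟨x, hx, ?_⟩
    unfold Dwell
    exact mem_filter.mpr ⟨hconf, hcon⟩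
  have hOutJ3 : ∀ N : ℕ, ∀ x ∈ Sstar, ∀ y ∈ Sstar.erase x,
      ∀ η ∈ bdOutJ S α ε Sstar N x y,
      ((η x:ℝ)) < N*(1-2*ε) ∧ ((η y:ℝ)) < N*(1-2*ε) := by
    intro N x hx y hy η hη
    have h1 := (mem_filter.mp hη).1
    have hconf : η ∈ configs S N := (mem_sdiff.mp h1).1
    have hG : η ∉ Gset S α ε Sstar N := (mem_sdiff.mp h1).2
    have hyS : y ∈ Sstar := (mem_erase.mp hy).2
    exact ⟨hnotD N x hx η hconf hG, hnotD N y hyS η hconf hG⟩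
  -- final squeeze
  constructor
  · apply squeeze_zero' (g := Bound)
    · filter_upwards with N
      apply mul_nonneg (Real.rpow_nonneg (Nat.cast_nonneg N) _)
      exact sum_nonneg (fun η _ => hμnn N η)
    · filter_upwards [hev1, hev2, hev3, eventually_ge_atTop 4, eventually_ge_atTop 1]
        with N h1 h2 h3 h4 h5
      calc (N:ℝ)^(1+α) * ∑ η ∈ bdInG S α ε Sstar N, μ N η
          ≤ (N:ℝ)^(1+α) * ((∑ x ∈ Sstar, ∑ η ∈ bdInD S α ε Sstar N x, μ N η)
              + ∑ x ∈ Sstar, ∑ y ∈ Sstar.erase x, ∑ η ∈ bdInJ S α ε N x y, μ N η) := by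
            apply mul_le_mul_of_nonneg_left (hubIn N)
              (Real.rpow_nonneg (Nat.cast_nonneg N) _)
        _ ≤ Bound N :=
            hkey 0 (by omega) N h5 h4 h1 h2 h3 _ _ (hInD1 N) (hInD2 N) (hInD3 N)
              (hInJ1 N) (hInJ2 N) (hInJ3 N)
    · exact hBtend
  · apply squeeze_zero' (g := Bound)
    · filter_upwards with N
      apply mul_nonneg (Real.rpow_nonneg (Nat.cast_nonneg N) _)
      exact sum_nonneg (fun η _ => hμnn N η)
    · filter_upwards [hev1, hev2, hev3, eventually_ge_atTop 4, eventually_ge_atTop 1]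
        with N h1 h2 h3 h4 h5
      calc (N:ℝ)^(1+α) * ∑ η ∈ bdOutG S α ε Sstar N, μ N η
          ≤ (N:ℝ)^(1+α) * ((∑ x ∈ Sstar, ∑ η ∈ bdOutD S α ε Sstar N x, μ N η)
              + ∑ x ∈ Sstar, ∑ y ∈ Sstar.erase x, ∑ η ∈ bdOutJ S α ε Sstar N x y, μ N η) := by
            apply mul_le_mul_of_nonneg_left (hubOut N)
              (Real.rpow_nonneg (Nat.cast_nonneg N) _)
        _ ≤ Bound N :=
            hkey 1 (by omega) N h5 h4 h1 h2 h3 _ _ (hOutD1 N) (hOutD2 N) (hOutD3 N)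
              (hOutJ1 N) (hOutJ2 N) (hOutJ3 N)
    · exact hBtend
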